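/- arXiv:2401.08828 — 4 statements merged into one kernel-verified Lean document; each statement's English description precedes it below -/
import Mathlib

section
/- Let p \ge 5 be a prime, n \ge 1 an integer, B a unit of \mathbb{Z}/p^{n+1}\mathbb{Z}, and u \in F_p^\times. Then the number of units A \in (\mathbb{Z}/p^{n+1}\mathbb{Z})^\times such that 4A^3 + 27B^2 = \tilde{u}\,p^n in \mathbb{Z}/p^{n+1}\mathbb{Z} (where \tilde{u} is any lift of u to \mathbb{Z}/p^{n+1}\mathbb{Z}; the condition is independent of the lift) equals #\{\zeta \in F_p : \zeta^3 = 1\} if (B \bmod p)^2 \in 4\,(F_p^\times)^3, and equals 0 otherwise. -/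
noncomputable section

namespace CountAux

variable (p n : ℕ) [hpp : Fact p.Prime]

abbrev pi' : (ZMod (p ^ (n + 1)))ˣ →* (ZMod p)ˣ :=
  ZMod.unitsMap (dvd_pow_self p (Nat.succ_ne_zero n))

lemma neZeroN : NeZero (p ^ (n + 1)) := ⟨pow_ne_zero _ hpp.out.ne_zero⟩

lemma card_ker : Nat.card (MonoidHom.ker (pi' p n)) = p ^ n := by
  haveI := neZeroN p n
  have h1 : Nat.card (MonoidHom.ker (pi' p n)) * (MonoidHom.ker (pi' p n)).index
      = Nat.card (ZMod (p ^ (n + 1)))ˣ := Subgroup.card_mul_index _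
  rw [Subgroup.index_ker] at h1
  have hsurj : Function.Surjective (pi' p n) :=
    ZMod.unitsMap_surjective (dvd_pow_self p (Nat.succ_ne_zero n))
  rw [MonoidHom.range_eq_top.mpr hsurj] at h1
  have h2 : Nat.card ((⊤ : Subgroup (ZMod p)ˣ)) = Nat.card (ZMod p)ˣ :=
    Nat.card_congr Subgroup.topEquiv.toEquiv
  rw [h2] at h1
  have hcu : Nat.card (ZMod (p ^ (n + 1)))ˣ = p ^ n * (p - 1) := by
    rw [Nat.card_eq_fintype_card, ZMod.card_units_eq_totient,
      Nat.totient_prime_pow hpp.out (Nat.succ_pos n)]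
    simp
  have hcp : Nat.card (ZMod p)ˣ = p - 1 := by
    rw [Nat.card_eq_fintype_card, ZMod.card_units_eq_totient, Nat.totient_prime hpp.out]
  rw [hcu, hcp] at h1
  have hp1 : 0 < p - 1 := by have := hpp.out.two_le; omega
  exact Nat.eq_of_mul_eq_mul_right hp1 h1

lemma coprime_ker (hp : 5 ≤ p) : (Nat.card (MonoidHom.ker (pi' p n))).Coprime 3 := by
  rw [card_ker]
  refine Nat.Coprime.pow_left n ?_
  have h3 : Nat.Prime 3 := by norm_num
  have hne : p ≠ 3 := by omega
  exact (Nat.coprime_primes hpp.out h3).mpr hne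

lemma cube_ker_surj (hp : 5 ≤ p) {y : (ZMod (p ^ (n + 1)))ˣ}
    (hy : y ∈ MonoidHom.ker (pi' p n)) :
    ∃ k ∈ MonoidHom.ker (pi' p n), k ^ 3 = y := by
  obtain ⟨k, hk⟩ := (powCoprime (coprime_ker p n hp)).surjective ⟨y, hy⟩
  refine ⟨k.1, k.2, ?_⟩
  have := congrArg Subtype.val hk
  simpa [powCoprime] using this

lemma cube_ker_inj (hp : 5 ≤ p) {x : (ZMod (p ^ (n + 1)))ˣ}
    (hx : x ∈ MonoidHom.ker (pi' p n)) (h1 : x ^ 3 = 1) : x = 1 := by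
  have h := (powCoprime (coprime_ker p n hp)).injective (a₁ := ⟨x, hx⟩) (a₂ := 1)
    (by apply Subtype.ext; simpa [powCoprime] using h1)
  exact congrArg Subtype.val h

lemma cube_lift (hp : 5 ≤ p) (c : (ZMod (p ^ (n + 1)))ˣ) (t : (ZMod p)ˣ)
    (h : pi' p n c = t ^ 3) : ∃ s, s ^ 3 = c := by
  haveI := neZeroN p n
  obtain ⟨s₀, hs₀⟩ := ZMod.unitsMap_surjective (dvd_pow_self p (Nat.succ_ne_zero n)) t
  have hker : c * (s₀ ^ 3)⁻¹ ∈ MonoidHom.ker (pi' p n) := by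
    rw [MonoidHom.mem_ker]
    simp [map_pow, hs₀, h]
  obtain ⟨k, hk, hk3⟩ := cube_ker_surj p n hp hker
  refine ⟨s₀ * k, ?_⟩
  rw [mul_pow, hk3, mul_comm c, mul_inv_cancel_left]

lemma image_cuberoots (hp : 5 ≤ p) :
    pi' p n '' {x | x ^ 3 = 1} = {y : (ZMod p)ˣ | y ^ 3 = 1} := by
  haveI := neZeroN p n
  ext y
  constructor
  · rintro ⟨x, hx, rfl⟩
    simp only [Set.mem_setOf_eq] at hx ⊢
    rw [← map_pow, hx, map_one]
  · intro hy
    obtain ⟨s, hs⟩ := ZMod.unitsMap_surjective (dvd_pow_self p (Nat.succ_ne_zero n)) y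
    have hker : s ^ 3 ∈ MonoidHom.ker (pi' p n) := by
      rw [MonoidHom.mem_ker, map_pow, hs]
      exact hy
    obtain ⟨k, hk, hk3⟩ := cube_ker_surj p n hp hker
    refine ⟨s * k⁻¹, ?_, ?_⟩
    · show (s * k⁻¹) ^ 3 = 1
      rw [mul_pow, inv_pow, hk3]
      group
    · rw [map_mul, map_inv, hs, MonoidHom.mem_ker.mp hk]
      simp

lemma injOn_cuberoots (hp : 5 ≤ p) :
    Set.InjOn (pi' p n) {x | x ^ 3 = 1} := by
  intro x hx y hy hxy
  have hker : x * y⁻¹ ∈ MonoidHom.ker (pi' p n) := by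
    rw [MonoidHom.mem_ker, map_mul, map_inv, hxy]
    group
  have h3 : (x * y⁻¹) ^ 3 = 1 := by
    rw [mul_pow, inv_pow, Set.mem_setOf_eq.mp hx, Set.mem_setOf_eq.mp hy]
    group
  have := cube_ker_inj p n hp hker h3
  have := mul_inv_eq_one.mp this
  exact this

lemma isUnit_of_cast_ne (x : ZMod (p ^ (n + 1)))
    (h : ZMod.castHom (dvd_pow_self p (Nat.succ_ne_zero n)) (ZMod p) x ≠ 0) : IsUnit x := by
  haveI := neZeroN p n
  have hx : ((x.val : ℕ) : ZMod (p ^ (n + 1))) = x := by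
    rw [ZMod.natCast_val, ZMod.cast_id]
  rw [← hx, ZMod.isUnit_iff_coprime]
  refine Nat.Coprime.pow_right _ ?_
  rw [Nat.coprime_comm, Nat.Prime.coprime_iff_not_dvd hpp.out]
  intro hdvd
  apply h
  rw [← hx, map_natCast, ZMod.natCast_eq_zero_iff]
  exact hdvd

end CountAux

/-- Hensel-type count: for a prime `p ≥ 5`, `n ≥ 1`, a unit `B` of `ℤ/p^{n+1}ℤ` and
`u ∈ F_p^×`, the number of units `A ∈ (ℤ/p^{n+1}ℤ)^×` with `4A³ + 27B² = ũ p^n` equals the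
number of cube roots of unity in `F_p` when `B̄² ∈ 4(F_p^×)³`, and `0` otherwise. -/
theorem count_units_with_discriminant_valuation (p : ℕ) [Fact p.Prime] (hp : 5 ≤ p)
    (n : ℕ) (hn : 1 ≤ n) (B : (ZMod (p ^ (n + 1)))ˣ) (u : (ZMod p)ˣ) :
    ((∃ t : (ZMod p)ˣ,
        (ZMod.castHom (dvd_pow_self p (Nat.succ_ne_zero n)) (ZMod p) (B : ZMod (p ^ (n + 1)))) ^ 2
          = 4 * (t : ZMod p) ^ 3) →
      Set.ncard {A : (ZMod (p ^ (n + 1)))ˣ |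
          4 * (A : ZMod (p ^ (n + 1))) ^ 3 + 27 * (B : ZMod (p ^ (n + 1))) ^ 2
            = (((u : ZMod p).val : ZMod (p ^ (n + 1)))) * (p : ZMod (p ^ (n + 1))) ^ n}
        = Set.ncard {ζ : ZMod p | ζ ^ 3 = 1}) ∧
    ((¬ ∃ t : (ZMod p)ˣ,
        (ZMod.castHom (dvd_pow_self p (Nat.succ_ne_zero n)) (ZMod p) (B : ZMod (p ^ (n + 1)))) ^ 2
          = 4 * (t : ZMod p) ^ 3) →
      Set.ncard {A : (ZMod (p ^ (n + 1)))ˣ |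
          4 * (A : ZMod (p ^ (n + 1))) ^ 3 + 27 * (B : ZMod (p ^ (n + 1))) ^ 2
            = (((u : ZMod p).val : ZMod (p ^ (n + 1)))) * (p : ZMod (p ^ (n + 1))) ^ n}
        = 0) := by
  haveI := CountAux.neZeroN p n
  have hppr : p.Prime := Fact.out
  set R := ZMod (p ^ (n + 1)) with hR
  set φ : R →+* ZMod p := ZMod.castHom (dvd_pow_self p (Nat.succ_ne_zero n)) (ZMod p) with hφdef
  have hn0 : n ≠ 0 := by omega
  -- nonzero numerals in ZMod p
  have hnd : ∀ m : ℕ, ¬ p ∣ m → ((m : ZMod p) ≠ 0) := fun m hm h0 =>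
    hm ((ZMod.natCast_eq_zero_iff m p).mp h0)
  have h3 : (3 : ZMod p) ≠ 0 := by
    have := hnd 3 (fun h => by have := Nat.le_of_dvd (by norm_num) h; omega)
    exact_mod_cast this
  have h4 : (4 : ZMod p) ≠ 0 := by
    have := hnd 4 (fun h => by have := Nat.le_of_dvd (by norm_num) h; omega)
    exact_mod_cast this
  have h27 : (27 : ZMod p) ≠ 0 := by
    have := hnd 27 (fun h => by
      have h' : p ∣ 3 ^ 3 := by norm_num at h ⊢; exact_mod_cast h
      have := Nat.le_of_dvd (by norm_num) (hppr.dvd_of_dvd_pow h')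
      omega)
    exact_mod_cast this
  set x₀ : R := (((u : ZMod p).val : R)) * (p : R) ^ n - 27 * (B : R) ^ 2 with hx₀def
  have hπB : ((CountAux.pi' p n) B : ZMod p) = φ (B : R) := rfl
  have hRHS : φ ((((u : ZMod p).val : R)) * (p : R) ^ n) = 0 := by
    rw [map_mul, map_pow, map_natCast, map_natCast, ZMod.natCast_self, zero_pow hn0, mul_zero]
  have hφx₀ : φ x₀ = -27 * (φ (B : R)) ^ 2 := by
    rw [hx₀def, map_sub, hRHS, map_mul, map_pow, map_ofNat]
    ring
  have hφx₀ne : φ x₀ ≠ 0 := by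
    rw [hφx₀, ← hπB]
    exact mul_ne_zero (neg_ne_zero.mpr h27)
      (pow_ne_zero _ ((CountAux.pi' p n) B).ne_zero)
  have hx : IsUnit x₀ := CountAux.isUnit_of_cast_ne p n x₀ hφx₀ne
  have h4R : IsUnit (4 : R) := CountAux.isUnit_of_cast_ne p n 4 (by
    rw [map_ofNat]; exact h4)
  set c : Rˣ := h4R.unit⁻¹ * hx.unit with hcdef
  have hc4 : (4 : R) * (c : R) = x₀ := by
    calc (4 : R) * (c : R) = ((h4R.unit : R) * ((h4R.unit⁻¹ : Rˣ) : R)) * (hx.unit : R) := by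
          rw [hcdef, Units.val_mul, h4R.unit_spec]; ring
      _ = x₀ := by rw [h4R.unit.mul_inv, one_mul, hx.unit_spec]
  -- the set as a cube fiber
  have hset : {A : Rˣ |
      4 * (A : R) ^ 3 + 27 * (B : R) ^ 2
        = (((u : ZMod p).val : R)) * (p : R) ^ n} = {A : Rˣ | A ^ 3 = c} := by
    ext A
    simp only [Set.mem_setOf_eq]
    rw [show (4 : R) * (A : R) ^ 3 + 27 * (B : R) ^ 2
          = (((u : ZMod p).val : R)) * (p : R) ^ n
        ↔ (4 : R) * (A : R) ^ 3 = x₀ from by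
      rw [hx₀def]; constructor <;> intro h <;> linear_combination h]
    rw [← hc4]
    constructor
    · intro h
      refine Units.ext ?_
      have := h4R.mul_left_cancel h
      simpa using this
    · intro h
      have : ((A ^ 3 : Rˣ) : R) = (c : R) := by rw [h]
      simpa using congrArg (fun z => (4 : R) * z) this
  -- reduction of c
  have hφc : (4 : ZMod p) * φ (c : R) = -27 * (φ (B : R)) ^ 2 := by
    have := congrArg φ hc4
    rw [map_mul, map_ofNat, hφx₀] at this
    exact this
  refine ⟨?_, ?_⟩
  · rintro ⟨t, ht⟩
    -- c is a cube
    have h3u : IsUnit (3 : ZMod p) := isUnit_iff_ne_zero.mpr h3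
    set w : (ZMod p)ˣ := -(h3u.unit * t) with hwdef
    have hw : (w : ZMod p) = -(3 * (t : ZMod p)) := by
      rw [hwdef, Units.val_neg, Units.val_mul, h3u.unit_spec]
    have hπc : (CountAux.pi' p n) c = w ^ 3 := by
      refine Units.ext ?_
      have h1 : ((CountAux.pi' p n) c : ZMod p) = φ (c : R) := rfl
      have h2 : φ (c : R) = -27 * (t : ZMod p) ^ 3 := by
        apply mul_left_cancel₀ h4
        rw [hφc, ht]
        ring
      rw [h1, h2]
      push_cast [hw]
      ring
    obtain ⟨s, hs⟩ := CountAux.cube_lift p n hp c w hπc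
    -- fiber = coset of cube roots of unity
    have hfiber : {A : Rˣ | A ^ 3 = c} = (fun x => s * x) '' {x : Rˣ | x ^ 3 = 1} := by
      ext A
      simp only [Set.mem_setOf_eq, Set.mem_image]
      constructor
      · intro hA
        refine ⟨s⁻¹ * A, ?_, by group⟩
        show (s⁻¹ * A) ^ 3 = 1
        rw [mul_pow, inv_pow, hA, hs]
        group
      · rintro ⟨x, hx1, rfl⟩
        rw [mul_pow, hx1, hs, mul_one]
    rw [hset, hfiber, Set.ncard_image_of_injective _ (mul_right_injective s)]
    have step1 : {x : (ZMod (p ^ (n + 1)))ˣ | x ^ 3 = 1}.ncard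
        = {y : (ZMod p)ˣ | y ^ 3 = 1}.ncard := by
      rw [← CountAux.image_cuberoots p n hp,
        Set.ncard_image_of_injOn (CountAux.injOn_cuberoots p n hp)]
    rw [step1]
    -- now compare unit cube roots in ZMod p with cube roots in ZMod p
    have himg : {ζ : ZMod p | ζ ^ 3 = 1} = Units.val '' {y : (ZMod p)ˣ | y ^ 3 = 1} := by
      ext ζ
      simp only [Set.mem_setOf_eq, Set.mem_image]
      constructor
      · intro hζ
        have hu : IsUnit ζ := IsUnit.of_mul_eq_one (a := ζ) (ζ ^ 2) (by
          rw [show ζ * ζ ^ 2 = ζ ^ 3 from by ring]; exact hζ)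
        refine ⟨hu.unit, ?_, hu.unit_spec⟩
        refine Units.ext ?_
        push_cast
        rw [hu.unit_spec]
        exact hζ
      · rintro ⟨y, hy, rfl⟩
        have := congrArg (Units.val) hy
        push_cast at this
        exact this
    rw [himg, Set.ncard_image_of_injective _ Units.val_injective]
  · intro hno
    have hempty : {A : Rˣ |
        4 * (A : R) ^ 3 + 27 * (B : R) ^ 2
          = (((u : ZMod p).val : R)) * (p : R) ^ n} = ∅ := by
      rw [Set.eq_empty_iff_forall_notMem]
      intro A hA
      simp only [Set.mem_setOf_eq] at hA
      have key : 4 * (φ (A : R)) ^ 3 + 27 * (φ (B : R)) ^ 2 = 0 := by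
        have := congrArg φ hA
        rw [map_add, map_mul, map_mul, map_pow, map_pow, map_ofNat, map_ofNat, hRHS] at this
        exact this
      apply hno
      have h3u : IsUnit (3 : ZMod p) := isUnit_iff_ne_zero.mpr h3
      refine ⟨-((CountAux.pi' p n) A * h3u.unit⁻¹), ?_⟩
      have hval : ((-((CountAux.pi' p n) A * h3u.unit⁻¹) : (ZMod p)ˣ) : ZMod p)
          = -(φ (A : R) * (3 : ZMod p)⁻¹) := by
        rw [Units.val_neg, Units.val_mul, Units.val_inv_eq_inv_val, h3u.unit_spec]
        rfl
      rw [hval]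
      field_simp
      first
      | linear_combination (2 : ZMod p) * key
      | linear_combination (-1 : ZMod p) * key
      | linear_combination key
      | linear_combination (-2 : ZMod p) * key
    rw [hempty]
    simp

end
end

section
/- Let \alpha be a nonnegative rational number and let f : \mathbb{Z}_{>0} \to \mathbb{R} be the multiplicative function defined on prime powers by f(p^r) = 1 - p^{-4} if r \ge 6 and f(p^r) = 1 if 1 \le r \le 5 (and f(1) = 1). Then there is a constant C > 0, depending only on \alpha, such that for every real Y \ge 1, |\sum_{1 \le B \le Y} B^{\alpha} f(B) - \zeta(10)^{-1} Y^{\alpha+1}/(\alpha+1)| \le C\,Y^{\alpha}, where the sum is over positive integers B \le Y. -/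
noncomputable section

open Finset ArithmeticFunction
open scoped ArithmeticFunction.Moebius ArithmeticFunction.zeta

namespace DirichletAsympAux

lemma icc_sum_eq {M : Type*} [AddCommMonoid M] (g : ℕ → M) (N : ℕ) :
    ∑ k ∈ Finset.Icc 1 N, g k = ∑ i ∈ Finset.range N, g (i + 1) := by
  rw [show Finset.Icc 1 N = Finset.Ico 1 (N+1) by rw [Finset.Ico_add_one_right_eq_Icc],
    Finset.sum_Ico_eq_sum_range]
  simp [add_comm]

lemma sum_rpow_est (a : ℝ) (ha : 0 ≤ a) (X : ℝ) (hX : 0 ≤ X) :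
    |(∑ k ∈ Finset.Icc 1 ⌊X⌋₊, (k : ℝ) ^ a) - X ^ (a + 1) / (a + 1)| ≤ 2 * X ^ a := by
  have ha1 : (0:ℝ) < a + 1 := by linarith
  have hmono : ∀ Z : ℝ, MonotoneOn (fun t : ℝ => t ^ a) (Set.Icc 0 Z) := by
    intro Z x hx y _ hxy
    exact Real.rpow_le_rpow hx.1 hxy ha
  rcases lt_or_ge X 1 with hX1 | hX1
  · have h0 : ⌊X⌋₊ = 0 := Nat.floor_eq_zero.mpr hX1
    rw [h0]
    rw [show Finset.Icc 1 0 = ∅ from rfl, Finset.sum_empty]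
    rw [abs_sub_comm, sub_zero, abs_of_nonneg
      (div_nonneg (Real.rpow_nonneg hX _) (le_of_lt ha1))]
    have h2 : X ^ (a+1) ≤ X ^ a := by
      rcases eq_or_lt_of_le hX with h | h
      · rw [← h, Real.zero_rpow (by linarith : a + 1 ≠ 0)]
        positivity
      · calc X ^ (a+1) = X ^ a * X := by rw [Real.rpow_add h, Real.rpow_one]
        _ ≤ X ^ a * 1 := by
            apply mul_le_mul_of_nonneg_left (le_of_lt hX1) (by positivity)
        _ = X ^ a := by ring
    have h3 : X ^ (a+1) / (a+1) ≤ X ^ (a+1) :=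
      div_le_self (Real.rpow_nonneg hX _) (by linarith)
    nlinarith [Real.rpow_nonneg hX a]
  · -- X ≥ 1
    set N := ⌊X⌋₊ with hN
    have hNX : (N : ℝ) ≤ X := Nat.floor_le hX
    have hXN : X - N ≤ 1 := by
      have := Nat.lt_floor_add_one X
      linarith
    have hNpos : (0:ℝ) ≤ N := Nat.cast_nonneg N
    have key := (hmono ((0:ℝ) + N)).integral_le_sum (x₀ := 0) (a := N)
    have key2 := (hmono ((0:ℝ) + N)).sum_le_integral (x₀ := 0) (a := N)
    simp only [zero_add] at key key2
    rw [integral_rpow (Or.inl (by linarith : (-1:ℝ) < a)),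
      Real.zero_rpow (by linarith : a + 1 ≠ 0)] at key key2
    rw [icc_sum_eq (fun k => (k:ℝ) ^ a) N]
    have kup : ∑ i ∈ Finset.range N, ((i + 1 : ℕ) : ℝ) ^ a
        ≤ ((N:ℝ) ^ (a+1) - 0)/(a+1) + (N:ℝ)^a := by
      have e1 := Finset.sum_range_succ' (fun i : ℕ => ((i:ℕ):ℝ)^a) N
      have e2 := Finset.sum_range_succ (fun i : ℕ => ((i:ℕ):ℝ)^a) N
      have h0a : (0:ℝ) ≤ ((0:ℕ):ℝ)^a := Real.rpow_nonneg (by norm_num) a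
      -- e1 : ∑_{range (N+1)} = ∑_{range N} (i+1)^a + 0^a ; e2 : = ∑_{range N} i^a + N^a
      nlinarith [key2]
    have hbridge : X^(a+1)/(a+1) - (N:ℝ)^(a+1)/(a+1) ≤ X ^ a ∧
        (N:ℝ)^(a+1)/(a+1) ≤ X^(a+1)/(a+1) := by
      constructor
      · have hInt : IntervalIntegrable (fun x : ℝ => x ^ a) MeasureTheory.volume (N:ℝ) X :=
          intervalIntegral.intervalIntegrable_rpow' (by linarith)
        have hmon : ∫ x in (N:ℝ)..X, x ^ a ≤ ∫ x in (N:ℝ)..X, X ^ a := by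
          apply intervalIntegral.integral_mono_on hNX hInt intervalIntegrable_const
          intro x hx
          exact Real.rpow_le_rpow (le_trans hNpos hx.1) hx.2 ha
        rw [intervalIntegral.integral_const, smul_eq_mul] at hmon
        have hsplit : ∫ x in (N:ℝ)..X, x ^ a
            = X^(a+1)/(a+1) - (N:ℝ)^(a+1)/(a+1) := by
          rw [integral_rpow (Or.inl (by linarith))]; ring
        rw [hsplit] at hmon
        have : (X - N) * X ^ a ≤ 1 * X ^ a :=
          mul_le_mul_of_nonneg_right hXN (Real.rpow_nonneg hX a)
        linarith
      · gcongr
    simp only [sub_zero] at key key2 kup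
    have hNa : (N:ℝ) ^ a ≤ X ^ a := Real.rpow_le_rpow hNpos hNX ha
    have hXa : (0:ℝ) ≤ X ^ a := Real.rpow_nonneg hX a
    rw [abs_le]
    constructor
    · linarith [key, hbridge.1]
    · linarith [kup, hbridge.2]

noncomputable def gg : ArithmeticFunction ℝ :=
  ⟨fun n => ∑ k ∈ Finset.range (n + 1), if k ^ 6 = n then (μ k : ℝ) / (k : ℝ) ^ 4 else 0, by
    simp⟩

lemma gg_apply (n : ℕ) :
    gg n = ∑ k ∈ Finset.range (n + 1), if k ^ 6 = n then (μ k : ℝ) / (k : ℝ) ^ 4 else 0 := rfl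

lemma gg_pow (k : ℕ) : gg (k ^ 6) = (μ k : ℝ) / (k : ℝ) ^ 4 := by
  rcases Nat.eq_zero_or_pos k with rfl | hk
  · simp [gg_apply]
  rw [gg_apply]
  rw [Finset.sum_eq_single k]
  · simp
  · intro j _ hj
    rw [if_neg]
    intro h
    exact hj (Nat.pow_left_injective (by norm_num) h)
  · intro h
    exfalso
    apply h
    rw [Finset.mem_range]
    calc k ≤ k ^ 6 := Nat.le_self_pow (by norm_num) k
    _ < k ^ 6 + 1 := Nat.lt_succ_self _

lemma gg_eq_zero {n : ℕ} (h : ∀ k, k ^ 6 ≠ n) : gg n = 0 := by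
  rw [gg_apply]
  apply Finset.sum_eq_zero
  intro j _
  rw [if_neg (h j)]

lemma gg_mult : gg.IsMultiplicative := by
  constructor
  · rw [show (1:ℕ) = 1 ^ 6 by norm_num, gg_pow]
    simp
  · intro m n hmn
    rcases Nat.eq_zero_or_pos m with rfl | hm
  -- m = 0 : n = 1
    · have : n = 1 := Nat.coprime_zero_left n |>.mp hmn
      subst this
      simp [ArithmeticFunction.map_zero]
    rcases Nat.eq_zero_or_pos n with rfl | hn
    · have : m = 1 := Nat.coprime_zero_right m |>.mp hmn
      subst this
      simp [ArithmeticFunction.map_zero]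
    by_cases hex : ∃ c, c ^ 6 = m * n
    · obtain ⟨c, hc⟩ := hex
      have hgcd : IsUnit (gcd m n) := by
        rw [Nat.isUnit_iff]
        exact hmn
      obtain ⟨a, ha⟩ := exists_eq_pow_of_mul_eq_pow hgcd hc.symm
      obtain ⟨b, hb⟩ := exists_eq_pow_of_mul_eq_pow (by rwa [gcd_comm] at hgcd)
        (by rw [mul_comm] at hc; exact hc.symm)
      subst ha hb
      have hab : Nat.Coprime a b := by
        apply Nat.Coprime.coprime_dvd_left (dvd_pow_self a (by norm_num : (6:ℕ) ≠ 0))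
        apply Nat.Coprime.coprime_dvd_right (dvd_pow_self b (by norm_num : (6:ℕ) ≠ 0))
        exact hmn
      rw [← mul_pow, gg_pow, gg_pow, gg_pow,
        ArithmeticFunction.isMultiplicative_moebius.map_mul_of_coprime hab]
      push_cast
      field_simp
    · push_neg at hex
      rw [gg_eq_zero hex]
      -- one of m, n is not a 6th power
      by_cases hm6 : ∃ a, a ^ 6 = m
      · by_cases hn6 : ∃ b, b ^ 6 = n
        · exfalso
          obtain ⟨a, ha⟩ := hm6
          obtain ⟨b, hb⟩ := hn6
          exact hex (a * b) (by rw [mul_pow, ha, hb])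
        · push_neg at hn6
          rw [gg_eq_zero hn6, mul_zero]
      · push_neg at hm6
        rw [gg_eq_zero hm6, zero_mul]

lemma gg_prime_pow {p : ℕ} (j : ℕ) (hp : p.Prime) :
    gg (p ^ j) = if j = 0 then 1 else if j = 6 then -((p:ℝ) ^ 4)⁻¹ else 0 := by
  by_cases hex : ∃ k, k ^ 6 = p ^ j
  · obtain ⟨k, hk⟩ := hex
    have hkdvd : k ∣ p ^ j := hk ▸ dvd_pow_self k (by norm_num : (6:ℕ) ≠ 0)
    obtain ⟨m, hm, rfl⟩ := (Nat.dvd_prime_pow hp).mp hkdvd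
    have hj : m * 6 = j := by
      rw [← pow_mul] at hk
      exact Nat.pow_right_injective hp.two_le hk
    rw [← hk, gg_pow]
    rcases Nat.lt_or_ge m 2 with hm2 | hm2
    · interval_cases m
      · simp at hj ⊢
        simp [← hj]
      · rw [pow_one, ArithmeticFunction.moebius_apply_prime hp]
        rw [← hj]
        norm_num [neg_div]
    · rw [ArithmeticFunction.moebius_apply_prime_pow hp (by omega)]
      rw [if_neg (by omega)]
      rw [if_neg (by omega), if_neg (by omega)]
      norm_num
  · push_neg at hex
    rw [gg_eq_zero hex]
    rw [if_neg, if_neg]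
    · intro h
      exact hex p (by rw [h])
    · intro h
      exact hex 1 (by rw [h]; norm_num)

lemma f_eq_sum_gg (f : ℕ → ℝ)
    (hf1 : f 1 = 1)
    (hfmul : ∀ m n : ℕ, Nat.Coprime m n → f (m * n) = f m * f n)
    (hfpp : ∀ p r : ℕ, p.Prime → 1 ≤ r →
      f (p ^ r) = if 6 ≤ r then 1 - ((p : ℝ) ^ (4 : ℕ))⁻¹ else 1) :
    ∀ n : ℕ, 0 < n → f n = ∑ d ∈ n.divisors, gg d := by
  set F : ArithmeticFunction ℝ := ⟨fun n => if n = 0 then 0 else f n, by simp⟩ with hF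
  have hFap : ∀ n : ℕ, 0 < n → F n = f n := by
    intro n hn
    show (if n = 0 then 0 else f n) = f n
    rw [if_neg (Nat.pos_iff_ne_zero.mp hn)]
  have hFmult : F.IsMultiplicative := by
    constructor
    · rw [hFap 1 one_pos, hf1]
    · intro m n hmn
      rcases Nat.eq_zero_or_pos m with rfl | hm
      · have : n = 1 := Nat.coprime_zero_left n |>.mp hmn
        subst this
        simp [ArithmeticFunction.map_zero]
      rcases Nat.eq_zero_or_pos n with rfl | hn
      · have : m = 1 := Nat.coprime_zero_right m |>.mp hmn
        subst this
        simp [ArithmeticFunction.map_zero]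
      rw [hFap m hm, hFap n hn, hFap (m*n) (Nat.mul_pos hm hn)]
      exact hfmul m n hmn
  have hzg : ((ζ : ArithmeticFunction ℝ) * gg).IsMultiplicative :=
    (ArithmeticFunction.isMultiplicative_zeta.natCast).mul gg_mult
  have key : F = (ζ : ArithmeticFunction ℝ) * gg := by
    rw [ArithmeticFunction.IsMultiplicative.eq_iff_eq_on_prime_powers F hFmult _ hzg]
    intro p i hp
    rw [ArithmeticFunction.coe_zeta_mul_apply,
      Nat.sum_divisors_prime_pow hp]
    have hsummand : ∀ j : ℕ, gg (p ^ j)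
        = (if j = 0 then (1:ℝ) else 0) + (if j = 6 then -((p:ℝ) ^ 4)⁻¹ else 0) := by
      intro j
      rw [gg_prime_pow j hp]
      rcases eq_or_ne j 0 with rfl | h0
      · norm_num
      rcases eq_or_ne j 6 with rfl | h6
      · norm_num
      simp [h0, h6]
    rw [Finset.sum_congr rfl (fun j _ => hsummand j), Finset.sum_add_distrib]
    rw [Finset.sum_ite_eq' (Finset.range (i+1)) 0 (fun _ => (1:ℝ)),
      Finset.sum_ite_eq' (Finset.range (i+1)) 6 (fun _ => -((p:ℝ) ^ 4)⁻¹)]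
    rw [if_pos (Finset.mem_range.mpr (Nat.succ_pos i))]
    rcases Nat.eq_zero_or_pos i with rfl | hi
    · rw [pow_zero, hFmult.map_one, if_neg (by simp)]
      norm_num
    · rw [hFap _ (pow_pos hp.pos i), hfpp p i hp hi]
      have : (6 ∈ Finset.range (i+1)) ↔ 6 ≤ i := by
        rw [Finset.mem_range]; omega
      rcases Nat.lt_or_ge i 6 with h6 | h6
      · rw [if_neg (by omega), if_neg (by rw [this]; omega)]
        norm_num
      · rw [if_pos (by omega), if_pos (by rw [this]; omega)]
        push_cast
        ring
  intro n hn
  rw [← hFap n hn, key, ArithmeticFunction.coe_zeta_mul_apply]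

lemma sum_icc_divisors (N : ℕ) (h : ℕ → ℕ → ℝ) :
    ∑ B ∈ Finset.Icc 1 N, ∑ d ∈ B.divisors, h d B
      = ∑ d ∈ Finset.Icc 1 N, ∑ k ∈ Finset.Icc 1 (N / d), h d (d * k) := by
  rw [Finset.sum_sigma' (Finset.Icc 1 N) (fun B => B.divisors) (fun B d => h d B),
    Finset.sum_sigma' (Finset.Icc 1 N) (fun d => Finset.Icc 1 (N / d)) (fun d k => h d (d * k))]
  apply Finset.sum_nbij' (fun x => (⟨x.2, x.1 / x.2⟩ : Σ _ : ℕ, ℕ))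
    (fun x => (⟨x.1 * x.2, x.1⟩ : Σ _ : ℕ, ℕ))
  · rintro ⟨B, d⟩ hx
    simp only [Finset.mem_sigma, Finset.mem_Icc, Nat.mem_divisors] at hx ⊢
    obtain ⟨⟨hB1, hBN⟩, hdvd, hB0⟩ := hx
    have hd1 : 1 ≤ d := Nat.pos_of_dvd_of_pos hdvd hB1
    exact ⟨⟨hd1, le_trans (Nat.le_of_dvd hB1 hdvd) hBN⟩,
      Nat.one_le_div_iff hd1 |>.mpr (Nat.le_of_dvd hB1 hdvd),
      Nat.div_le_div_right hBN⟩
  · rintro ⟨d, k⟩ hx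
    simp only [Finset.mem_sigma, Finset.mem_Icc, Nat.mem_divisors] at hx ⊢
    obtain ⟨⟨hd1, hdN⟩, hk1, hkN⟩ := hx
    have hdk : d * k ≤ N := by
      rw [Nat.le_div_iff_mul_le (by omega)] at hkN
      rw [mul_comm]
      exact hkN
    exact ⟨⟨Nat.one_le_iff_ne_zero.mpr (by positivity), hdk⟩,
      Dvd.intro k rfl, by positivity⟩
  · rintro ⟨B, d⟩ hx
    simp only [Finset.mem_sigma, Finset.mem_Icc, Nat.mem_divisors] at hx
    simp only
    congr 1
    exact Nat.mul_div_cancel' hx.2.1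
  · rintro ⟨d, k⟩ hx
    simp only [Finset.mem_sigma, Finset.mem_Icc, Nat.mem_divisors] at hx
    simp only
    congr 1
    rw [Nat.mul_div_cancel_left]
    omega
  · rintro ⟨B, d⟩ hx
    simp only [Finset.mem_sigma, Finset.mem_Icc, Nat.mem_divisors] at hx
    simp only
    rw [Nat.mul_div_cancel' hx.2.1]

lemma sum_gg_reindex (N : ℕ) (W : ℕ → ℝ) (hW : ∀ d, N < d → W d = 0) :
    ∑ d ∈ Finset.Icc 1 N, gg d * W d
      = ∑ m ∈ Finset.Icc 1 N, (μ m : ℝ) / (m : ℝ) ^ 4 * W (m ^ 6) := by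
  set T := ((Finset.Icc 1 N).filter (fun m => m ^ 6 ≤ N)).image (· ^ 6) with hT
  have hTsub : T ⊆ Finset.Icc 1 N := by
    intro d hd
    rw [hT, Finset.mem_image] at hd
    obtain ⟨m, hm, rfl⟩ := hd
    rw [Finset.mem_filter, Finset.mem_Icc] at hm
    rw [Finset.mem_Icc]
    obtain ⟨⟨hm1, _⟩, hm2⟩ := hm
    exact ⟨Nat.one_le_iff_ne_zero.mpr (pow_ne_zero 6 (by omega : m ≠ 0)), hm2⟩
  have step1 : ∑ d ∈ Finset.Icc 1 N, gg d * W d = ∑ d ∈ T, gg d * W d := by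
    rw [Finset.sum_subset hTsub]
    intro d hd hdT
    rw [Finset.mem_Icc] at hd
    have : gg d = 0 := by
      apply gg_eq_zero
      intro k hk
      apply hdT
      rw [hT, Finset.mem_image]
      refine ⟨k, ?_, hk⟩
      rw [Finset.mem_filter, Finset.mem_Icc, hk]
      have hk1 : 1 ≤ k := by
        rcases Nat.eq_zero_or_pos k with rfl | h
        · exfalso; rw [← hk] at hd; simp at hd
        · exact h
      exact ⟨⟨hk1, le_trans (hk ▸ Nat.le_self_pow (by norm_num) k) hd.2⟩, hd.2⟩
    rw [this, zero_mul]
  have step2 : ∑ d ∈ T, gg d * W d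
      = ∑ m ∈ (Finset.Icc 1 N).filter (fun m => m ^ 6 ≤ N), (μ m : ℝ) / (m : ℝ) ^ 4 * W (m ^ 6) := by
    rw [hT, Finset.sum_image]
    · apply Finset.sum_congr rfl
      intro m _
      rw [gg_pow]
    · intro x _ y _ hxy
      exact Nat.pow_left_injective (by norm_num) hxy
  have step3 : ∑ m ∈ (Finset.Icc 1 N).filter (fun m => m ^ 6 ≤ N),
        (μ m : ℝ) / (m : ℝ) ^ 4 * W (m ^ 6)
      = ∑ m ∈ Finset.Icc 1 N, (μ m : ℝ) / (m : ℝ) ^ 4 * W (m ^ 6) := by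
    rw [Finset.sum_subset (Finset.filter_subset _ _)]
    intro m hm hmf
    rw [Finset.mem_filter] at hmf
    have : N < m ^ 6 := by
      by_contra hc
      push_neg at hc
      exact hmf ⟨hm, hc⟩
    rw [hW _ this, mul_zero]
  rw [step1, step2, step3]

lemma summable_shift (s : ℕ) (hs : 2 ≤ s) :
    Summable (fun n : ℕ => 1 / ((n : ℝ) + 1) ^ s) := by
  have h := Real.summable_one_div_nat_pow.mpr hs
  have h2 := (summable_nat_add_iff 1).mpr h
  apply h2.congr
  intro n
  push_cast
  ring_nf

lemma moebius_abs (n : ℕ) : |(μ n : ℝ)| ≤ 1 := by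
  have h : |μ n| ≤ 1 := abs_moebius_le_one
  calc |(μ n : ℝ)| = ((|μ n| : ℤ) : ℝ) := by rw [Int.cast_abs]
  _ ≤ 1 := by exact_mod_cast h

lemma moebius_term_summable :
    Summable (fun n : ℕ => (μ (n + 1) : ℝ) / ((n : ℝ) + 1) ^ 10) := by
  apply Summable.of_abs
  apply Summable.of_nonneg_of_le (fun n => abs_nonneg _)
    (fun n => ?_) (summable_shift 10 (by norm_num))
  rw [abs_div, abs_of_nonneg (by positivity : (0:ℝ) ≤ ((n:ℝ)+1)^10)]
  gcongr
  exact moebius_abs _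

noncomputable def Z (s : ℕ) : ℝ := ∑' n : ℕ, 1 / ((n : ℝ) + 1) ^ s
noncomputable def Lmu : ℝ := ∑' n : ℕ, (μ (n + 1) : ℝ) / ((n : ℝ) + 1) ^ 10

lemma Z_pos (s : ℕ) (hs : 2 ≤ s) : 0 < Z s := by
  have := summable_shift s hs
  apply Summable.tsum_pos this (fun n => by positivity) 0
  norm_num

lemma Z_nonneg (s : ℕ) : 0 ≤ Z s := by
  by_cases h : Summable (fun n : ℕ => 1 / ((n : ℝ) + 1) ^ s)
  · exact tsum_nonneg (fun n => by positivity)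
  · exact tsum_nonneg (fun n => by positivity)

lemma partial_le_Z (N : ℕ) : ∑ m ∈ Finset.Icc 1 N, 1 / (m : ℝ) ^ 4 ≤ Z 4 := by
  have he : ∑ m ∈ Finset.Icc 1 N, 1 / (m : ℝ) ^ 4
      = ∑ i ∈ Finset.range N, 1 / ((i : ℝ) + 1) ^ 4 := by
    rw [show Finset.Icc 1 N = Finset.Ico 1 (N+1) by rw [Finset.Ico_add_one_right_eq_Icc],
      Finset.sum_Ico_eq_sum_range]
    simp only [Nat.add_sub_cancel]
    apply Finset.sum_congr rfl
    intro i _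
    push_cast
    ring_nf
  rw [he]
  exact Summable.sum_le_tsum (Finset.range N) (fun n _ => by positivity)
    (summable_shift 4 (by norm_num))

set_option maxHeartbeats 1000000 in
lemma moebius_tail (N : ℕ) :
    |Lmu - ∑ m ∈ Finset.Icc 1 N, (μ m : ℝ) / (m : ℝ) ^ 10| ≤ Z 9 / ((N : ℝ) + 1) := by
  have hsum := moebius_term_summable
  have he : ∑ m ∈ Finset.Icc 1 N, (μ m : ℝ) / (m : ℝ) ^ 10
      = ∑ i ∈ Finset.range N, (μ (i + 1) : ℝ) / ((i : ℝ) + 1) ^ 10 := by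
    rw [show Finset.Icc 1 N = Finset.Ico 1 (N+1) by rw [Finset.Ico_add_one_right_eq_Icc],
      Finset.sum_Ico_eq_sum_range]
    simp only [Nat.add_sub_cancel]
    apply Finset.sum_congr rfl
    intro i _
    rw [add_comm 1 i]
    push_cast
    ring_nf
  rw [he]
  have hkey := Summable.sum_add_tsum_nat_add N hsum
  rw [show Lmu = ∑' n : ℕ, (μ (n + 1) : ℝ) / ((n : ℝ) + 1) ^ 10 from rfl, ← hkey]
  rw [add_sub_cancel_left]
  have htail : Summable (fun i : ℕ => (μ (i + N + 1) : ℝ) / (((i + N : ℕ) : ℝ) + 1) ^ 10) :=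
    (summable_nat_add_iff N).mpr hsum
  have hrhs : Summable (fun i : ℕ => (1 / ((N:ℝ) + 1)) * (1 / ((i : ℝ) + 1) ^ 9)) :=
    (summable_shift 9 (by norm_num)).mul_left _
  have hptwise : ∀ i : ℕ, |(μ (i + N + 1) : ℝ) / (((i + N : ℕ) : ℝ) + 1) ^ 10|
      ≤ (1 / ((N:ℝ) + 1)) * (1 / ((i : ℝ) + 1) ^ 9) := by
    intro i
    push_cast
    rw [abs_div, abs_of_nonneg (by positivity : (0:ℝ) ≤ ((i:ℝ)+(N:ℝ)+1)^10)]
    rw [div_le_iff₀ (by positivity)]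
    have h2 : ((i:ℝ)+1)^9 ≤ ((i:ℝ)+(N:ℝ)+1)^9 := by
      apply pow_le_pow_left₀ (by positivity)
      have : (0:ℝ) ≤ (N:ℝ) := Nat.cast_nonneg N
      linarith
    have h1 : ((N:ℝ)+1) ≤ ((i:ℝ)+(N:ℝ)+1) := by
      have : (0:ℝ) ≤ (i:ℝ) := Nat.cast_nonneg i
      linarith
    have hmul : ((N:ℝ)+1) * ((i:ℝ)+1)^9 ≤ ((i:ℝ)+(N:ℝ)+1) * ((i:ℝ)+(N:ℝ)+1)^9 :=
      mul_le_mul h1 h2 (by positivity) (by positivity)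
    have hpow : ((i:ℝ)+(N:ℝ)+1) * ((i:ℝ)+(N:ℝ)+1)^9 = ((i:ℝ)+(N:ℝ)+1)^10 := by ring
    rw [hpow] at hmul
    calc |(μ (i + N + 1) : ℝ)| ≤ 1 := moebius_abs _
    _ ≤ 1 / ((N:ℝ)+1) * (1 / ((i:ℝ)+1)^9) * ((i:ℝ)+(N:ℝ)+1)^10 := by
        rw [div_mul_div_comm, one_mul, div_mul_eq_mul_div, one_mul, le_div_iff₀ (by positivity)]
        linarith
  calc |∑' i : ℕ, (μ (i + N + 1) : ℝ) / (((i + N : ℕ) : ℝ) + 1) ^ 10|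
      ≤ ∑' i : ℕ, |(μ (i + N + 1) : ℝ) / (((i + N : ℕ) : ℝ) + 1) ^ 10| := by
        have := norm_tsum_le_tsum_norm (f := fun i : ℕ =>
          (μ (i + N + 1) : ℝ) / (((i + N : ℕ) : ℝ) + 1) ^ 10) (htail.abs.congr (fun i => by
            rw [Real.norm_eq_abs]))
        simpa [Real.norm_eq_abs, abs_div] using this
    _ ≤ ∑' i : ℕ, (1 / ((N:ℝ) + 1)) * (1 / ((i : ℝ) + 1) ^ 9) :=
        Summable.tsum_le_tsum hptwise htail.abs hrhs
    _ = Z 9 / ((N : ℝ) + 1) := by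
        rw [tsum_mul_left, show Z 9 = ∑' n : ℕ, 1 / ((n : ℝ) + 1) ^ 9 from rfl]
        ring

lemma Lmu_eq_inv : Lmu = (Z 10)⁻¹ := by
  have h10 : (1:ℝ) < (10:ℂ).re := by norm_num
  have hkey := ArithmeticFunction.LSeries_zeta_mul_Lseries_moebius (s := 10) h10
  have hμsum : LSeriesSummable (fun n => (μ n : ℂ)) 10 :=
    ArithmeticFunction.LSeriesSummable_moebius_iff.mpr h10
  have hζsum : LSeriesSummable (fun n => ((ζ n : ℕ) : ℂ)) 10 := by
    have := ArithmeticFunction.LSeriesSummable_zeta_iff.mpr h10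
    exact this
  have hζ : LSeries (fun n => ((ζ n : ℕ) : ℂ)) 10 = ((Z 10 : ℝ) : ℂ) := by
    rw [LSeries, Summable.tsum_eq_zero_add hζsum]
    rw [LSeries.term_zero, zero_add]
    rw [show ((Z 10 : ℝ) : ℂ) = ∑' n : ℕ, ((1 / ((n : ℝ) + 1) ^ 10 : ℝ) : ℂ) from
      Complex.ofReal_tsum _]
    apply tsum_congr
    intro n
    rw [LSeries.term_of_ne_zero (Nat.succ_ne_zero n)]
    rw [ArithmeticFunction.zeta_apply_ne (Nat.succ_ne_zero n),
      show (10:ℂ) = ((10:ℕ):ℂ) by norm_num, Complex.cpow_natCast]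
    push_cast
    norm_num
  have hμ : LSeries (fun n => (μ n : ℂ)) 10 = ((Lmu : ℝ) : ℂ) := by
    rw [LSeries, Summable.tsum_eq_zero_add hμsum]
    rw [LSeries.term_zero, zero_add]
    rw [show ((Lmu : ℝ) : ℂ) = ∑' n : ℕ, (((μ (n+1) : ℝ) / ((n : ℝ) + 1) ^ 10 : ℝ) : ℂ) from
      Complex.ofReal_tsum _]
    apply tsum_congr
    intro n
    rw [LSeries.term_of_ne_zero (Nat.succ_ne_zero n),
      show (10:ℂ) = ((10:ℕ):ℂ) by norm_num, Complex.cpow_natCast]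
    push_cast
    norm_num
  rw [hζ, hμ, ← Complex.ofReal_mul, ← Complex.ofReal_one, Complex.ofReal_inj] at hkey
  exact eq_inv_of_mul_eq_one_right hkey


end DirichletAsympAux

open DirichletAsympAux in
set_option maxHeartbeats 2000000 in
/-- Asymptotic for the weighted partial sums `∑_{B ≤ Y} B^α f(B)`, where `f` is the
multiplicative function with `f(p^r) = 1 - p^{-4}` for `r ≥ 6` and `f(p^r) = 1` for
`1 ≤ r ≤ 5`: the sum equals `ζ(10)⁻¹ Y^{α+1}/(α+1) + O(Y^α)`. -/
theorem dirichlet_f_asymptotic (α : ℚ) (hα : 0 ≤ α) (f : ℕ → ℝ)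
    (hf1 : f 1 = 1)
    (hfmul : ∀ m n : ℕ, Nat.Coprime m n → f (m * n) = f m * f n)
    (hfpp : ∀ p r : ℕ, p.Prime → 1 ≤ r →
      f (p ^ r) = if 6 ≤ r then 1 - ((p : ℝ) ^ (4 : ℕ))⁻¹ else 1) :
    ∃ C : ℝ, 0 < C ∧ ∀ Y : ℝ, 1 ≤ Y →
      |(∑ B ∈ Finset.Icc 1 ⌊Y⌋₊, (B : ℝ) ^ (α : ℝ) * f B) -
          (∑' m : ℕ, ((m : ℝ) + 1) ^ (-10 : ℤ))⁻¹ * Y ^ ((α : ℝ) + 1) / ((α : ℝ) + 1)|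
        ≤ C * Y ^ (α : ℝ) := by
  have hZ4 := Z_nonneg 4
  have hZ9 := Z_nonneg 9
  refine ⟨2 * Z 4 + Z 9 + 1, by linarith, ?_⟩
  intro Y hY
  set a : ℝ := (α : ℝ) with ha_def
  have ha : 0 ≤ a := ha_def ▸ (by exact_mod_cast hα : (0:ℝ) ≤ (α:ℝ))
  have ha1 : (0:ℝ) < a + 1 := by linarith
  have hY0 : (0:ℝ) < Y := by linarith
  set N := ⌊Y⌋₊ with hN
  -- notation for inner sums
  set Sa : ℕ → ℝ := fun M => ∑ k ∈ Finset.Icc 1 M, (k:ℝ) ^ a with hSa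
  set W : ℕ → ℝ := fun d => (d:ℝ) ^ a * Sa (N / d) with hWdef
  -- constant identification
  have hconst : (∑' m : ℕ, ((m : ℝ) + 1) ^ (-10 : ℤ))⁻¹ = Lmu := by
    rw [Lmu_eq_inv]
    congr 1
    rw [show Z 10 = ∑' n : ℕ, 1 / ((n : ℝ) + 1) ^ (10:ℕ) from rfl]
    apply tsum_congr
    intro m
    rw [zpow_neg, ← one_div]
    congr 1
  rw [hconst]
  -- Step A : convolution expansion and swap
  have hstep1 : ∑ B ∈ Finset.Icc 1 N, (B:ℝ) ^ a * f B
      = ∑ B ∈ Finset.Icc 1 N, ∑ d ∈ B.divisors, (B:ℝ) ^ a * gg d := by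
    apply Finset.sum_congr rfl
    intro B hB
    rw [Finset.mem_Icc] at hB
    rw [f_eq_sum_gg f hf1 hfmul hfpp B (by omega), Finset.mul_sum]
  have hstep2 := sum_icc_divisors N (fun d B => (B:ℝ) ^ a * gg d)
  have hstep3 : ∀ d ∈ Finset.Icc 1 N,
      ∑ k ∈ Finset.Icc 1 (N / d), ((d * k : ℕ):ℝ) ^ a * gg d = gg d * W d := by
    intro d _
    calc ∑ k ∈ Finset.Icc 1 (N/d), ((d * k : ℕ):ℝ) ^ a * gg d
        = ∑ k ∈ Finset.Icc 1 (N/d), (d:ℝ) ^ a * ((k:ℝ) ^ a * gg d) := by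
          apply Finset.sum_congr rfl
          intro k _
          rw [Nat.cast_mul, Real.mul_rpow (Nat.cast_nonneg d) (Nat.cast_nonneg k)]
          ring
      _ = gg d * W d := by
          rw [← Finset.mul_sum, ← Finset.sum_mul]
          simp only [hWdef, hSa]
          ring
  have hstep4 : ∑ d ∈ Finset.Icc 1 N, gg d * W d
      = ∑ m ∈ Finset.Icc 1 N, (μ m : ℝ) / (m:ℝ) ^ 4 * W (m ^ 6) := by
    apply sum_gg_reindex N W
    intro d hd
    simp only [hWdef, hSa]
    rw [Nat.div_eq_of_lt hd]
    norm_num [show Finset.Icc 1 0 = (∅ : Finset ℕ) from rfl]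
  -- termwise estimate
  have hterm : ∀ m ∈ Finset.Icc 1 N,
      |(μ m : ℝ)/(m:ℝ)^4 * W (m^6) - (μ m : ℝ)/(m:ℝ)^10 * (Y ^ (a+1) / (a+1))|
        ≤ (2 * Y ^ a) * (1 / (m:ℝ)^4) := by
    intro m hm
    rw [Finset.mem_Icc] at hm
    have hm1 : (1:ℝ) ≤ (m:ℝ) := by exact_mod_cast hm.1
    have hm0 : (0:ℝ) < (m:ℝ) := by linarith
    set X : ℝ := Y / (m:ℝ)^6 with hX
    have hX0 : 0 ≤ X := by positivity
    have hfl : N / m ^ 6 = ⌊X⌋₊ := by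
      rw [hX, hN, ← Nat.floor_div_natCast Y (m ^ 6)]
      congr 2
      push_cast
      ring
    have hest := sum_rpow_est a ha X hX0
    have hXa1 : X ^ (a+1) = Y ^ (a+1) / ((m:ℝ)^6) ^ (a+1) :=
      Real.div_rpow (le_of_lt hY0) (by positivity : (0:ℝ) ≤ (m:ℝ)^6) (a+1)
    have hXa : X ^ a = Y ^ a / ((m:ℝ)^6) ^ a :=
      Real.div_rpow (le_of_lt hY0) (by positivity : (0:ℝ) ≤ (m:ℝ)^6) a
    have hP : (0:ℝ) < ((m:ℝ)^6) ^ a := Real.rpow_pos_of_pos (by positivity) a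
    have hsplit : ((m:ℝ)^6) ^ (a+1) = ((m:ℝ)^6) ^ a * (m:ℝ)^6 := by
      rw [Real.rpow_add (by positivity), Real.rpow_one]
    have hc : ((m ^ 6 : ℕ):ℝ) = (m:ℝ)^6 := by push_cast; ring
    have hiden : (μ m : ℝ)/(m:ℝ)^4 * (((m:ℝ)^6) ^ a * (X ^ (a+1)/(a+1)))
        = (μ m : ℝ)/(m:ℝ)^10 * (Y ^ (a+1) / (a+1)) := by
      rw [hXa1, hsplit]
      field_simp
    have hdiff : (μ m : ℝ)/(m:ℝ)^4 * W (m^6) - (μ m : ℝ)/(m:ℝ)^10 * (Y^(a+1)/(a+1))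
        = ((μ m : ℝ)/(m:ℝ)^4 * ((m:ℝ)^6) ^ a) * (Sa (N / m^6) - X^(a+1)/(a+1)) := by
      rw [← hiden]
      simp only [hWdef, hc]
      ring
    rw [hdiff, abs_mul]
    have h1 : |Sa (N / m ^ 6) - X ^ (a+1)/(a+1)| ≤ 2 * X ^ a := by
      rw [hSa, hfl]
      exact hest
    have h2 : |(μ m : ℝ)/(m:ℝ)^4 * ((m:ℝ)^6) ^ a| ≤ ((m:ℝ)^6) ^ a / (m:ℝ)^4 := by
      rw [abs_mul, abs_div, abs_of_nonneg (by positivity : (0:ℝ) ≤ (m:ℝ)^4),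
        abs_of_nonneg (le_of_lt hP), div_mul_eq_mul_div]
      apply div_le_div_of_nonneg_right ?_ (by positivity) |>.trans_eq rfl
      nlinarith [moebius_abs m, hP, abs_nonneg (μ m : ℝ)]
    calc |(μ m : ℝ)/(m:ℝ)^4 * ((m:ℝ)^6) ^ a| * |Sa (N / m^6) - X^(a+1)/(a+1)|
        ≤ (((m:ℝ)^6) ^ a / (m:ℝ)^4) * (2 * X ^ a) := by
          apply mul_le_mul h2 h1 (abs_nonneg _) (by positivity)
      _ = (2 * Y ^ a) * (1 / (m:ℝ)^4) := by
          rw [hXa]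
          field_simp
  -- sum the errors
  have hsum1 : |(∑ m ∈ Finset.Icc 1 N, (μ m : ℝ)/(m:ℝ)^4 * W (m^6))
      - (∑ m ∈ Finset.Icc 1 N, (μ m : ℝ)/(m:ℝ)^10) * (Y^(a+1)/(a+1))|
      ≤ 2 * Y ^ a * Z 4 := by
    rw [Finset.sum_mul, ← Finset.sum_sub_distrib]
    refine (Finset.abs_sum_le_sum_abs _ _).trans ?_
    calc ∑ m ∈ Finset.Icc 1 N,
          |(μ m : ℝ)/(m:ℝ)^4 * W (m^6) - (μ m : ℝ)/(m:ℝ)^10 * (Y^(a+1)/(a+1))|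
        ≤ ∑ m ∈ Finset.Icc 1 N, (2 * Y ^ a) * (1 / (m:ℝ)^4) := Finset.sum_le_sum hterm
      _ = (2 * Y ^ a) * ∑ m ∈ Finset.Icc 1 N, 1 / (m:ℝ)^4 := by rw [Finset.mul_sum]
      _ ≤ (2 * Y ^ a) * Z 4 := by
          apply mul_le_mul_of_nonneg_left (partial_le_Z N) (by positivity)
      _ = 2 * Y ^ a * Z 4 := by ring
  -- tail estimate
  have hYN1 : Y ≤ (N:ℝ) + 1 := le_of_lt (Nat.lt_floor_add_one Y)
  have htail : |(∑ m ∈ Finset.Icc 1 N, (μ m : ℝ)/(m:ℝ)^10) - Lmu| ≤ Z 9 / Y := by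
    have h := moebius_tail N
    rw [abs_sub_comm] at h
    refine h.trans ?_
    apply div_le_div_of_nonneg_left hZ9 hY0 hYN1
  have hmain2 : |(∑ m ∈ Finset.Icc 1 N, (μ m : ℝ)/(m:ℝ)^10) * (Y^(a+1)/(a+1))
      - Lmu * (Y^(a+1)/(a+1))| ≤ Z 9 * Y ^ a := by
    rw [← sub_mul, abs_mul,
      abs_of_nonneg (by positivity : (0:ℝ) ≤ Y^(a+1)/(a+1))]
    have hYsplit : Y ^ (a+1) = Y ^ a * Y := by
      rw [Real.rpow_add hY0, Real.rpow_one]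
    have hYa : (0:ℝ) < Y ^ a := Real.rpow_pos_of_pos hY0 a
    calc |(∑ m ∈ Finset.Icc 1 N, (μ m : ℝ)/(m:ℝ)^10) - Lmu| * (Y^(a+1)/(a+1))
        ≤ (Z 9 / Y) * (Y^(a+1)/(a+1)) := by
          apply mul_le_mul_of_nonneg_right htail (by positivity)
      _ = Z 9 * Y ^ a / (a+1) := by
          rw [hYsplit]
          field_simp
      _ ≤ Z 9 * Y ^ a := by
          apply div_le_self (by positivity) (by linarith)
  -- put everything together
  rw [hstep1, hstep2, Finset.sum_congr rfl hstep3, hstep4]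
  have htri := abs_sub_le
    (∑ m ∈ Finset.Icc 1 N, (μ m : ℝ)/(m:ℝ)^4 * W (m^6))
    ((∑ m ∈ Finset.Icc 1 N, (μ m : ℝ)/(m:ℝ)^10) * (Y^(a+1)/(a+1)))
    (Lmu * (Y^(a+1)/(a+1)))
  rw [show Lmu * Y ^ (a+1) / (a+1) = Lmu * (Y^(a+1)/(a+1)) by ring]
  have hYa : (0:ℝ) < Y ^ a := Real.rpow_pos_of_pos hY0 a
  nlinarith [htri, hsum1, hmain2]

end
end

section
/- Let g : \mathbb{Z}_{>0} \to \mathbb{R} be the multiplicative function defined on prime powers by g(p^r) = p^4 if r \ge 6 and g(p^r) = 1 if 1 \le r \le 5 (and g(1) = 1). Then there is a constant C > 0 such that for every real Y \ge 1, |\sum_{1 \le B \le Y} g(B) - (\prod_{p prime}(1 + (p^4-1)/p^6))\,Y| \le C\,Y^{5/6}, where the sum is over positive integers B \le Y. -/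
noncomputable section

instance (p : Nat.Primes) : Fact (p : ℕ).Prime := ⟨p.2⟩

open Finset

namespace DGaux

def F (p k : ℕ) : ℝ := if k = 0 then 1 else if k = 6 then (p : ℝ) ^ 4 - 1 else 0

def h (n : ℕ) : ℝ := if n = 0 then 0 else n.factorization.prod F

lemma h_zero : h 0 = 0 := if_pos rfl

lemma h_one : h 1 = 1 := by simp [h, Nat.factorization_one]

lemma F_zero (p : ℕ) : F p 0 = 1 := if_pos rfl

lemma F_six (p : ℕ) : F p 6 = (p : ℝ) ^ 4 - 1 := by norm_num [F]

lemma F_eq_zero {p k : ℕ} (h0 : k ≠ 0) (h6 : k ≠ 6) : F p k = 0 := by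
  simp [F, h0, h6]

lemma F_nonneg {p : ℕ} (hp : 1 ≤ p) (k : ℕ) : 0 ≤ F p k := by
  unfold F
  split
  · norm_num
  · split
    · have : (1:ℝ) ≤ (p:ℝ) ^ 4 := one_le_pow₀ (by exact_mod_cast hp)
      linarith
    · exact le_rfl

lemma h_mul {m n : ℕ} (hmn : Nat.Coprime m n) : h (m * n) = h m * h n := by
  rcases eq_or_ne m 0 with rfl | hm
  · have : n = 1 := by simpa [Nat.coprime_zero_left] using hmn
    subst this; simp [h_zero, h_one]
  rcases eq_or_ne n 0 with rfl | hn
  · have : m = 1 := by simpa [Nat.coprime_zero_right] using hmn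
    subst this; simp [h_zero, h_one]
  unfold h
  rw [if_neg (Nat.mul_ne_zero hm hn), if_neg hm, if_neg hn,
    Nat.factorization_mul_of_coprime hmn,
    Finsupp.prod_add_index_of_disjoint]
  simpa [Nat.support_factorization] using hmn.disjoint_primeFactors

lemma h_prime_pow {p : ℕ} (hp : p.Prime) (r : ℕ) : h (p ^ r) = F p r := by
  unfold h
  rw [if_neg (pow_ne_zero r hp.pos.ne'), Nat.Prime.factorization_pow hp,
    Finsupp.prod_single_index (F_zero p)]

lemma h_nonneg (n : ℕ) : 0 ≤ h n := by
  unfold h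
  split
  · exact le_rfl
  · apply Finset.prod_nonneg
    intro p hp
    have hp' : p.Prime := Nat.prime_of_mem_primeFactors (by
      rwa [← Nat.support_factorization])
    exact F_nonneg hp'.one_lt.le _

lemma h_support {n : ℕ} (hn : h n ≠ 0) : ∃ m, n = m ^ 6 := by
  rcases eq_or_ne n 0 with rfl | h0
  · exact absurd h_zero hn
  refine ⟨∏ p ∈ n.primeFactors, p, ?_⟩
  have hfac : ∀ p ∈ n.primeFactors, n.factorization p = 6 := by
    intro p hp
    by_contra hne
    apply hn
    unfold h
    rw [if_neg h0]
    apply Finset.prod_eq_zero (i := p) (by rwa [Nat.support_factorization])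
    have hpos : n.factorization p ≠ 0 := by
      rw [← Finsupp.mem_support_iff, Nat.support_factorization]; exact hp
    exact F_eq_zero hpos hne
  conv_lhs => rw [← Nat.factorization_prod_pow_eq_self h0]
  rw [Finsupp.prod, Nat.support_factorization, ← Finset.prod_pow]
  exact Finset.prod_congr rfl fun p hp => by rw [hfac p hp]

lemma h_pow6_le {m : ℕ} (hm : m ≠ 0) : h (m ^ 6) ≤ (m : ℝ) ^ 4 := by
  have hstep : h (m ^ 6) = ∏ p ∈ m.primeFactors, F p (6 * m.factorization p) := by
    unfold h
    rw [if_neg (pow_ne_zero _ hm), Finsupp.prod, Nat.support_factorization,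
      Nat.primeFactors_pow _ (by norm_num)]
    refine Finset.prod_congr rfl fun p hp => ?_
    rw [Nat.factorization_pow, Finsupp.smul_apply, smul_eq_mul]
  rw [hstep]
  have hself : ∏ p ∈ m.primeFactors, p ^ m.factorization p = m := by
    have := Nat.factorization_prod_pow_eq_self hm
    rwa [Finsupp.prod, Nat.support_factorization] at this
  calc ∏ p ∈ m.primeFactors, F p (6 * m.factorization p)
      ≤ ∏ p ∈ m.primeFactors, ((p:ℝ) ^ m.factorization p) ^ 4 := by
        apply Finset.prod_le_prod
        · intro p hp
          exact F_nonneg (Nat.prime_of_mem_primeFactors hp).one_lt.le _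
        · intro p hp
          have hp1 : (1:ℝ) ≤ (p:ℝ) :=
            Nat.one_le_cast.mpr (Nat.prime_of_mem_primeFactors hp).one_lt.le
          rcases Nat.lt_or_ge (m.factorization p) 2 with he | he
          · interval_cases he' : m.factorization p
            · simp [F_zero]
            · rw [show 6 * 1 = 6 by norm_num, F_six]
              have : (0:ℝ) ≤ (p:ℝ) ^ 4 := by positivity
              nlinarith [one_le_pow₀ hp1 (n := 4)]
          · rw [F_eq_zero (by omega) (by omega)]
            positivity
    _ = (m : ℝ) ^ 4 := by
        rw [Finset.prod_pow]
        conv_rhs => rw [← hself]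
        push_cast
        ring


lemma sum_F_range {p : ℕ} (i : ℕ) :
    ∑ e ∈ range (i + 1), F p e = if 6 ≤ i then (p : ℝ) ^ 4 else 1 := by
  rcases le_or_gt 6 i with h6 | h6
  · rw [if_pos h6, ← Finset.sum_subset (s₁ := ({0, 6} : Finset ℕ))
      (by intro x hx; simp only [mem_insert, mem_singleton] at hx
          rcases hx with rfl | rfl <;> simp only [Finset.mem_range] <;> omega)
      (by intro x hx hnx
          simp only [mem_insert, mem_singleton, not_or] at hnx
          exact F_eq_zero hnx.1 hnx.2)]
    rw [Finset.sum_pair (by norm_num), F_zero, F_six]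
    ring
  · rw [if_neg (by omega), Finset.sum_eq_single 0]
    · exact F_zero p
    · intro e he hne
      exact F_eq_zero hne (by simp only [Finset.mem_range] at he; omega)
    · intro h0
      simp at h0

lemma g_eq (g : ℕ → ℝ) (hg1 : g 1 = 1)
    (hgmul : ∀ m n : ℕ, Nat.Coprime m n → g (m * n) = g m * g n)
    (hgpp : ∀ p r : ℕ, p.Prime → 1 ≤ r →
      g (p ^ r) = if 6 ≤ r then (p : ℝ) ^ (4 : ℕ) else 1) :
    ∀ n : ℕ, n ≠ 0 → g n = ∑ d ∈ n.divisors, h d := by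
  set G : ArithmeticFunction ℝ := ⟨fun n => if n = 0 then 0 else g n, if_pos rfl⟩ with hGdef
  set H : ArithmeticFunction ℝ := ⟨h, h_zero⟩ with hHdef
  have hGapp : ∀ n : ℕ, G n = if n = 0 then 0 else g n := fun n => rfl
  have hHapp : ∀ n : ℕ, H n = h n := fun n => rfl
  have hHm : H.IsMultiplicative := by
    constructor
    · rw [hHapp, h_one]
    · intro m n hmn
      rw [hHapp, hHapp, hHapp]
      exact h_mul hmn
  have hGm : G.IsMultiplicative := by
    constructor
    · rw [hGapp]; simpa using hg1
    · intro m n hmn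
      rcases eq_or_ne m 0 with rfl | hm
      · have : n = 1 := by simpa [Nat.coprime_zero_left] using hmn
        subst this
        simp [hGapp, hg1]
      rcases eq_or_ne n 0 with rfl | hn
      · have : m = 1 := by simpa [Nat.coprime_zero_right] using hmn
        subst this
        simp [hGapp, hg1]
      rw [hGapp, hGapp, hGapp, if_neg (Nat.mul_ne_zero hm hn), if_neg hm, if_neg hn]
      exact hgmul m n hmn
  have key : G = ↑(ArithmeticFunction.zeta) * H := by
    rw [ArithmeticFunction.IsMultiplicative.eq_iff_eq_on_prime_powers G hGm _
      (ArithmeticFunction.isMultiplicative_zeta.natCast.mul hHm)]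
    intro p i hp
    rw [ArithmeticFunction.coe_zeta_mul_apply]
    have hdiv : ∑ d ∈ (p ^ i).divisors, H d = ∑ e ∈ range (i + 1), F p e := by
      rw [Nat.sum_divisors_prime_pow hp]
      exact Finset.sum_congr rfl fun e _ => by rw [hHapp, h_prime_pow hp]
    rw [hdiv, sum_F_range]
    rcases Nat.eq_zero_or_pos i with rfl | hi
    · simp [hGapp, hg1]
    · rw [hGapp, if_neg (pow_ne_zero _ hp.pos.ne'), hgpp p i hp hi]
  intro n hn
  have := congrArg (fun f : ArithmeticFunction ℝ => f n) key
  simp only [ArithmeticFunction.coe_zeta_mul_apply] at this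
  rw [hGapp, if_neg hn] at this
  rw [this]
  exact Finset.sum_congr rfl fun d _ => hHapp d

lemma sum_swap (f : ℕ → ℝ) (N : ℕ) :
    ∑ B ∈ Icc 1 N, ∑ d ∈ B.divisors, f d = ∑ d ∈ Icc 1 N, f d * ((N / d : ℕ) : ℝ) := by
  rw [Finset.sum_comm' (s := Icc 1 N) (t := fun B => B.divisors)
      (t' := Icc 1 N) (s' := fun d => (Icc 1 N).filter (d ∣ ·))
      (h := by
        intro B d
        simp only [Finset.mem_Icc, Nat.mem_divisors, Finset.mem_filter]
        constructor
        · rintro ⟨⟨hB1, hBN⟩, hdB, hB0⟩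
          have hd1 : 1 ≤ d := Nat.pos_of_dvd_of_pos hdB (by omega)
          have hdN : d ≤ N := le_trans (Nat.le_of_dvd (by omega) hdB) hBN
          exact ⟨⟨⟨hB1, hBN⟩, hdB⟩, hd1, hdN⟩
        · rintro ⟨⟨⟨hB1, hBN⟩, hdB⟩, _, _⟩
          exact ⟨⟨hB1, hBN⟩, hdB, by omega⟩)]
  refine Finset.sum_congr rfl fun d _ => ?_
  rw [Finset.sum_const, show Icc 1 N = Ioc 0 N from Finset.Icc_add_one_left_eq_Ioc 0 N,
    Nat.Ioc_filter_dvd_card_eq_div, nsmul_eq_mul, mul_comm]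

lemma sum_sixth (φ : ℕ → ℝ) (N M : ℕ) (hM : ∀ m : ℕ, 1 ≤ m → (m ^ 6 ≤ N ↔ m ≤ M))
    (hφ : ∀ d : ℕ, (∀ m, d ≠ m ^ 6) → φ d = 0) :
    ∑ d ∈ Icc 1 N, φ d = ∑ m ∈ Icc 1 M, φ (m ^ 6) := by
  have hinj : ∀ x ∈ Icc 1 M, ∀ y ∈ Icc 1 M, x ^ 6 = y ^ 6 → x = y := by
    intro x _ y _ hxy
    exact Nat.pow_left_injective (by norm_num) hxy
  rw [← Finset.sum_image (f := φ) (g := fun m => m ^ 6) hinj]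
  refine (Finset.sum_subset ?_ ?_).symm
  · intro d hd
    simp only [Finset.mem_image, Finset.mem_Icc] at hd ⊢
    obtain ⟨m, ⟨hm1, hmM⟩, rfl⟩ := hd
    exact ⟨Nat.one_le_pow _ _ (by omega), (hM m hm1).mpr hmM⟩
  · intro d hd hnd
    apply hφ
    intro m hdm
    subst hdm
    rw [Finset.mem_Icc] at hd
    have hm1 : 1 ≤ m := by
      rcases Nat.eq_zero_or_pos m with rfl | hpos
      · exact absurd hd.1 (by simp)
      · exact hpos
    exact absurd (Finset.mem_image.mpr
      ⟨m, Finset.mem_Icc.mpr ⟨hm1, (hM m hm1).mp hd.2⟩, rfl⟩) hnd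


def Fm (m : ℕ) : ℝ := h (m ^ 6) / (m : ℝ) ^ 6

lemma Fm_zero : Fm 0 = 0 := by simp [Fm, h_zero]

lemma Fm_nonneg (m : ℕ) : 0 ≤ Fm m := div_nonneg (h_nonneg _) (by positivity)

lemma Fm_le (m : ℕ) : Fm m ≤ 1 / (m : ℝ) ^ 2 := by
  rcases Nat.eq_zero_or_pos m with rfl | hm
  · simp [Fm_zero]
  · have hm0 : (0:ℝ) < (m:ℝ) := by exact_mod_cast hm
    calc Fm m ≤ (m:ℝ) ^ 4 / (m:ℝ) ^ 6 := by
          unfold Fm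
          gcongr
          exact h_pow6_le hm.ne'
      _ = 1 / (m:ℝ) ^ 2 := by field_simp

lemma summable_Fm : Summable Fm :=
  Summable.of_nonneg_of_le Fm_nonneg Fm_le
    (Real.summable_one_div_nat_pow.mpr (by norm_num))

def fdiv (n : ℕ) : ℝ := h n / n

lemma fdiv_zero : fdiv 0 = 0 := by simp [fdiv, h_zero]

lemma fdiv_one : fdiv 1 = 1 := by simp [fdiv, h_one]

lemma fdiv_mul {m n : ℕ} (hmn : Nat.Coprime m n) : fdiv (m * n) = fdiv m * fdiv n := by
  unfold fdiv
  rw [h_mul hmn]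
  push_cast
  rw [mul_div_mul_comm]

lemma fdiv_pow6 (m : ℕ) : fdiv (m ^ 6) = Fm m := by
  unfold fdiv Fm
  push_cast
  rfl

lemma fdiv_support {n : ℕ} (hn : fdiv n ≠ 0) : ∃ m, n = m ^ 6 :=
  h_support fun h0 => hn (by simp [fdiv, h0])

lemma hinj6 : Function.Injective (fun m : ℕ => m ^ 6) :=
  Nat.pow_left_injective (by norm_num)

lemma summable_fdiv_norm : Summable fun n => ‖fdiv n‖ := by
  refine (hinj6.summable_iff ?_).mp ?_
  · intro x hx
    rcases eq_or_ne (fdiv x) 0 with h0 | h0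
    · simp [h0]
    · obtain ⟨m, rfl⟩ := fdiv_support h0
      exact absurd (Set.mem_range.mpr ⟨m, rfl⟩) hx
  · refine summable_Fm.congr fun m => ?_
    simp only [Function.comp_apply]
    rw [fdiv_pow6, Real.norm_eq_abs, abs_of_nonneg (Fm_nonneg m)]

lemma tsum_fdiv_eq_tsum_Fm : ∑' n, fdiv n = ∑' m, Fm m := by
  rw [← hinj6.tsum_eq (f := fdiv)
    (fun x hx => by
      obtain ⟨m, rfl⟩ := fdiv_support hx
      exact ⟨m, rfl⟩)]
  exact tsum_congr fun m => fdiv_pow6 m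

lemma euler_eq :
    (∏' p : Nat.Primes, (1 + ((p : ℝ) ^ 4 - 1) / (p : ℝ) ^ 6)) = ∑' n, fdiv n := by
  rw [← EulerProduct.eulerProduct_tprod (f := fdiv) fdiv_one (fun {m n} hmn => fdiv_mul hmn)
    summable_fdiv_norm fdiv_zero]
  refine tprod_congr fun p => ?_
  have hp : (p : ℕ).Prime := p.2
  have hterm : ∀ e : ℕ, fdiv ((p : ℕ) ^ e) = F (p : ℕ) e / ((p : ℕ) : ℝ) ^ e := by
    intro e
    unfold fdiv
    rw [h_prime_pow hp]
    push_cast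
    rfl
  rw [tsum_congr hterm, tsum_eq_sum (s := ({0, 6} : Finset ℕ))
    (by
      intro e he
      simp only [Finset.mem_insert, Finset.mem_singleton, not_or] at he
      rw [F_eq_zero he.1 he.2, zero_div])]
  rw [Finset.sum_pair (by norm_num : (0:ℕ) ≠ 6), F_zero, F_six]
  norm_num

lemma partial_tail (M : ℕ) (hM : 1 ≤ M) :
    |(∑ m ∈ Icc 1 M, Fm m) - ∑' m, Fm m| ≤ 1 / (M : ℝ) := by
  have hM0 : (0:ℝ) < (M:ℝ) := by exact_mod_cast hM
  have hsplit := Summable.sum_add_tsum_nat_add (f := Fm) (M + 1) summable_Fm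
  have hIcc : ∑ m ∈ range (M + 1), Fm m = ∑ m ∈ Icc 1 M, Fm m := by
    refine (Finset.sum_subset (fun x hx => ?_) (fun x hx hnx => ?_)).symm
    · rw [Finset.mem_Icc] at hx
      rw [Finset.mem_range]
      omega
    · rw [Finset.mem_range] at hx
      rw [Finset.mem_Icc] at hnx
      have : x = 0 := by omega
      subst this
      exact Fm_zero
  have htail_nonneg : 0 ≤ ∑' k, Fm (k + (M + 1)) := tsum_nonneg fun k => Fm_nonneg _
  have htail : ∑' k, Fm (k + (M + 1)) ≤ 1 / (M : ℝ) := by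
    apply Real.tsum_le_of_sum_range_le (fun n => Fm_nonneg _)
    intro n
    have hterm : ∀ k : ℕ, Fm (k + (M + 1)) ≤
        1 / ((M : ℝ) + k) - 1 / ((M : ℝ) + k + 1) := by
      intro k
      have hM1 : (1:ℝ) ≤ (M:ℝ) := by exact_mod_cast hM
      have hk0 : (0:ℝ) ≤ (k:ℝ) := by positivity
      have hx : (1:ℝ) ≤ (M:ℝ) + k := by linarith
      have h1 : Fm (k + (M + 1)) ≤ 1 / (((k + (M + 1) : ℕ)) : ℝ) ^ 2 := Fm_le _
      have hcast : (((k + (M + 1) : ℕ)) : ℝ) = (M : ℝ) + k + 1 := by push_cast; ring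
      rw [hcast] at h1
      have h2 : 1 / ((M : ℝ) + k + 1) ^ 2 ≤ 1 / (((M : ℝ) + k) * ((M : ℝ) + k + 1)) := by
        apply one_div_le_one_div_of_le
        · positivity
        · nlinarith
      have h3 : 1 / (((M : ℝ) + k) * ((M : ℝ) + k + 1)) =
          1 / ((M : ℝ) + k) - 1 / ((M : ℝ) + k + 1) := by
        have ha : ((M:ℝ) + k) ≠ 0 := by positivity
        have hb : ((M:ℝ) + k + 1) ≠ 0 := by positivity
        field_simp
        ring
      calc Fm (k + (M + 1)) ≤ 1 / ((M : ℝ) + k + 1) ^ 2 := h1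
        _ ≤ 1 / (((M : ℝ) + k) * ((M : ℝ) + k + 1)) := h2
        _ = _ := h3
    calc ∑ k ∈ range n, Fm (k + (M + 1))
        ≤ ∑ k ∈ range n, (1 / ((M : ℝ) + k) - 1 / ((M : ℝ) + k + 1)) :=
          Finset.sum_le_sum fun k _ => hterm k
      _ = 1 / ((M : ℝ)) - 1 / ((M : ℝ) + n) := by
          have hts := Finset.sum_range_sub' (f := fun k : ℕ => 1 / ((M : ℝ) + k)) (n := n)
          simp only [Nat.cast_zero, add_zero] at hts
          rw [← hts]
          exact Finset.sum_congr rfl fun k _ => by push_cast; ring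
      _ ≤ 1 / (M : ℝ) := by
          have : (0:ℝ) ≤ 1 / ((M : ℝ) + n) := by positivity
          linarith
  rw [← hsplit, hIcc]
  have heq : (∑ m ∈ Icc 1 M, Fm m) -
      ((∑ m ∈ Icc 1 M, Fm m) + ∑' k, Fm (k + (M + 1))) = -(∑' k, Fm (k + (M + 1))) := by
    ring
  rw [heq, abs_neg, abs_of_nonneg htail_nonneg]
  exact htail


end DGaux

open DGaux


/-- Asymptotic for the partial sums `∑_{B ≤ Y} g(B)`, where `g` is the multiplicative function
with `g(p^r) = p⁴` for `r ≥ 6` and `g(p^r) = 1` for `1 ≤ r ≤ 5`: the sum equals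
`(∏_p (1 + (p⁴-1)/p⁶)) Y + O(Y^{5/6})`. -/
theorem dirichlet_g_asymptotic (g : ℕ → ℝ)
    (hg1 : g 1 = 1)
    (hgmul : ∀ m n : ℕ, Nat.Coprime m n → g (m * n) = g m * g n)
    (hgpp : ∀ p r : ℕ, p.Prime → 1 ≤ r →
      g (p ^ r) = if 6 ≤ r then (p : ℝ) ^ (4 : ℕ) else 1) :
    ∃ C : ℝ, 0 < C ∧ ∀ Y : ℝ, 1 ≤ Y →
      |(∑ B ∈ Finset.Icc 1 ⌊Y⌋₊, g B) -
          (∏' p : Nat.Primes, (1 + ((p : ℝ) ^ 4 - 1) / (p : ℝ) ^ 6)) * Y|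
        ≤ C * Y ^ ((5 : ℝ) / 6) := by
  refine ⟨5, by norm_num, ?_⟩
  intro Y hY
  have hY0 : (0:ℝ) < Y := lt_of_lt_of_le one_pos hY
  set N : ℕ := ⌊Y⌋₊ with hNdef
  set t : ℝ := Y ^ ((1:ℝ)/6) with htdef
  have ht1 : (1:ℝ) ≤ t := by
    have := Real.rpow_le_rpow (by norm_num) hY (by norm_num : (0:ℝ) ≤ 1/6)
    rwa [Real.one_rpow] at this
  set M : ℕ := ⌊t⌋₊ with hMdef
  have hM1 : 1 ≤ M := Nat.le_floor (by exact_mod_cast ht1)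
  have hM0 : (0:ℝ) < (M:ℝ) := by exact_mod_cast hM1
  have hMle : (M:ℝ) ≤ t := Nat.floor_le (by linarith)
  have ht6 : t ^ (6:ℕ) = Y := by
    rw [htdef, ← Real.rpow_natCast (Y ^ ((1:ℝ)/6)) 6, ← Real.rpow_mul hY0.le]
    norm_num
  have hiff : ∀ m : ℕ, 1 ≤ m → (m ^ 6 ≤ N ↔ m ≤ M) := by
    intro m hm
    rw [hNdef, hMdef, Nat.le_floor_iff hY0.le, Nat.le_floor_iff (by linarith : (0:ℝ) ≤ t)]
    constructor
    · intro hle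
      have h6 : ((m:ℝ)) ^ (6:ℕ) ≤ t ^ (6:ℕ) := by
        rw [ht6]; exact_mod_cast hle
      exact le_of_pow_le_pow_left₀ (by norm_num) (by linarith) h6
    · intro hle
      have hpow := pow_le_pow_left₀ (by positivity : (0:ℝ) ≤ (m:ℝ)) hle 6
      rw [ht6] at hpow
      exact_mod_cast hpow
  have hvanish : ∀ d : ℕ, (∀ m, d ≠ m ^ 6) → h d * ((N / d : ℕ) : ℝ) = 0 := by
    intro d hd
    have h0 : h d = 0 := by
      by_contra hne
      obtain ⟨m, rfl⟩ := h_support hne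
      exact hd m rfl
    rw [h0, zero_mul]
  have hgsum : ∑ B ∈ Icc 1 N, g B = ∑ m ∈ Icc 1 M, h (m ^ 6) * ((N / m ^ 6 : ℕ) : ℝ) := by
    rw [Finset.sum_congr rfl (fun B hB => g_eq g hg1 hgmul hgpp B (by
        rw [Finset.mem_Icc] at hB; omega)),
      sum_swap h N, sum_sixth (fun d => h d * ((N / d : ℕ) : ℝ)) N M hiff hvanish]
  have hC : (∏' p : Nat.Primes, (1 + ((p : ℝ) ^ 4 - 1) / (p : ℝ) ^ 6)) = ∑' m, Fm m :=
    euler_eq.trans tsum_fdiv_eq_tsum_Fm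
  have hfloor : ∀ m : ℕ, 1 ≤ m → |((N / m ^ 6 : ℕ) : ℝ) - Y / (m:ℝ) ^ 6| ≤ 1 := by
    intro m hm
    have hm0 : (0:ℝ) < (m:ℝ) := by exact_mod_cast hm
    have heqfloor : (N / m ^ 6 : ℕ) = ⌊Y / ((m ^ 6 : ℕ) : ℝ)⌋₊ :=
      (Nat.floor_div_natCast Y (m ^ 6)).symm
    have hcast : ((m ^ 6 : ℕ) : ℝ) = (m:ℝ) ^ 6 := by push_cast; ring
    rw [heqfloor, hcast]
    have hx0 : (0:ℝ) ≤ Y / (m:ℝ) ^ 6 := by positivity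
    have h1 : (⌊Y / (m:ℝ) ^ 6⌋₊ : ℝ) ≤ Y / (m:ℝ) ^ 6 := Nat.floor_le hx0
    have h2 : Y / (m:ℝ) ^ 6 < ⌊Y / (m:ℝ) ^ 6⌋₊ + 1 := Nat.lt_floor_add_one _
    rw [abs_le]
    constructor <;> linarith
  have hhb : ∀ m ∈ Icc 1 M, h (m ^ 6) ≤ (M:ℝ) ^ 4 := by
    intro m hm
    rw [Finset.mem_Icc] at hm
    calc h (m ^ 6) ≤ (m:ℝ) ^ 4 := h_pow6_le (by omega)
      _ ≤ (M:ℝ) ^ 4 := by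
          apply pow_le_pow_left₀ (by positivity)
          exact_mod_cast hm.2
  have hAT : |(∑ m ∈ Icc 1 M, h (m ^ 6) * ((N / m ^ 6 : ℕ) : ℝ)) -
      ∑ m ∈ Icc 1 M, h (m ^ 6) * (Y / (m:ℝ) ^ 6)| ≤ (M:ℝ) ^ 5 := by
    rw [← Finset.sum_sub_distrib]
    calc |∑ m ∈ Icc 1 M, (h (m ^ 6) * ((N / m ^ 6 : ℕ) : ℝ) - h (m ^ 6) * (Y / (m:ℝ) ^ 6))|
        ≤ ∑ m ∈ Icc 1 M,
            |h (m ^ 6) * ((N / m ^ 6 : ℕ) : ℝ) - h (m ^ 6) * (Y / (m:ℝ) ^ 6)| :=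
          Finset.abs_sum_le_sum_abs _ _
      _ ≤ ∑ _m ∈ Icc 1 M, (M:ℝ) ^ 4 := by
          apply Finset.sum_le_sum
          intro m hm
          have hm1 : 1 ≤ m := (Finset.mem_Icc.mp hm).1
          rw [← mul_sub, abs_mul, abs_of_nonneg (h_nonneg _)]
          calc h (m ^ 6) * |((N / m ^ 6 : ℕ) : ℝ) - Y / (m:ℝ) ^ 6|
              ≤ h (m ^ 6) * 1 :=
                mul_le_mul_of_nonneg_left (hfloor m hm1) (h_nonneg _)
            _ = h (m ^ 6) := mul_one _
            _ ≤ (M:ℝ) ^ 4 := hhb m hm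
      _ = (M:ℝ) * (M:ℝ) ^ 4 := by
          rw [Finset.sum_const, Nat.card_Icc, nsmul_eq_mul]
          norm_num
      _ = (M:ℝ) ^ 5 := by ring
  have hT : ∑ m ∈ Icc 1 M, h (m ^ 6) * (Y / (m:ℝ) ^ 6) = Y * ∑ m ∈ Icc 1 M, Fm m := by
    rw [Finset.mul_sum]
    exact Finset.sum_congr rfl fun m _ => by unfold Fm; ring
  have htail := partial_tail M hM1
  have hM1' : (1:ℝ) ≤ (M:ℝ) := by exact_mod_cast hM1
  have hM2 : t ≤ 2 * M := by
    rcases le_or_gt t 2 with h2 | h2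
    · linarith
    · nlinarith [Nat.sub_one_lt_floor t]
  have hY56 : (0:ℝ) < Y ^ ((5:ℝ)/6) := Real.rpow_pos_of_pos hY0 _
  have hM5 : (M:ℝ) ^ 5 ≤ Y ^ ((5:ℝ)/6) := by
    calc (M:ℝ) ^ 5 ≤ t ^ (5:ℕ) := pow_le_pow_left₀ hM0.le hMle 5
      _ = Y ^ ((5:ℝ)/6) := by
          rw [htdef, ← Real.rpow_natCast (Y ^ ((1:ℝ)/6)) 5, ← Real.rpow_mul hY0.le]
          norm_num
  have hYM : Y * (1 / (M:ℝ)) ≤ 2 * Y ^ ((5:ℝ)/6) := by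
    rw [mul_one_div, div_le_iff₀ hM0]
    have hsplit' : Y ^ ((5:ℝ)/6) * t = Y := by
      rw [htdef, ← Real.rpow_add hY0]
      norm_num
    calc Y = Y ^ ((5:ℝ)/6) * t := hsplit'.symm
      _ ≤ Y ^ ((5:ℝ)/6) * (2 * M) := mul_le_mul_of_nonneg_left hM2 hY56.le
      _ = 2 * Y ^ ((5:ℝ)/6) * M := by ring
  rw [hgsum, hC]
  have hsplit2 : (∑ m ∈ Icc 1 M, h (m ^ 6) * ((N / m ^ 6 : ℕ) : ℝ)) - (∑' m, Fm m) * Y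
      = ((∑ m ∈ Icc 1 M, h (m ^ 6) * ((N / m ^ 6 : ℕ) : ℝ)) -
          ∑ m ∈ Icc 1 M, h (m ^ 6) * (Y / (m:ℝ) ^ 6))
        + Y * ((∑ m ∈ Icc 1 M, Fm m) - ∑' m, Fm m) := by
    rw [hT]
    ring
  rw [hsplit2]
  calc |_ + Y * ((∑ m ∈ Icc 1 M, Fm m) - ∑' m, Fm m)|
      ≤ |(∑ m ∈ Icc 1 M, h (m ^ 6) * ((N / m ^ 6 : ℕ) : ℝ)) -
          ∑ m ∈ Icc 1 M, h (m ^ 6) * (Y / (m:ℝ) ^ 6)|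
        + |Y * ((∑ m ∈ Icc 1 M, Fm m) - ∑' m, Fm m)| := abs_add_le _ _
    _ ≤ (M:ℝ) ^ 5 + Y * (1 / (M:ℝ)) := by
        apply add_le_add hAT
        rw [abs_mul, abs_of_pos hY0]
        exact mul_le_mul_of_nonneg_left htail hY0.le
    _ ≤ Y ^ ((5:ℝ)/6) + 2 * Y ^ ((5:ℝ)/6) := add_le_add hM5 hYM
    _ ≤ 5 * Y ^ ((5:ℝ)/6) := by linarith

end
end

section
/- lim_{X\to\infty} #\mathcal{E}(X)/X^{5/6} = 4 / (\zeta(10) \cdot 4^{1/3} \cdot 27^{1/2}). -/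
open Filter Topology

noncomputable section

/-- The set `ℰ` of pairs `(A,B) ∈ ℤ²` with `4A³ + 27B² ≠ 0` such that there is no prime `p`
with `p⁴ ∣ A` and `p⁶ ∣ B`; minimal integral models of elliptic curves over `ℚ`. -/
def EllipticPairs : Set (ℤ × ℤ) :=
  {AB | 4 * AB.1 ^ 3 + 27 * AB.2 ^ 2 ≠ 0 ∧
    ∀ p : ℕ, p.Prime → ¬ ((p : ℤ) ^ 4 ∣ AB.1 ∧ (p : ℤ) ^ 6 ∣ AB.2)}

/-- The set `ℰ(X)` of pairs in `ℰ` of naive height `max(4|A|³, 27B²)` at most `X`. -/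
def EllipticPairsLE (X : ℝ) : Set (ℤ × ℤ) :=
  {AB ∈ EllipticPairs | ((4 * |AB.1| ^ 3 : ℤ) : ℝ) ≤ X ∧ ((27 * AB.2 ^ 2 : ℤ) : ℝ) ≤ X}

open Finset ArithmeticFunction LSeries
open scoped ArithmeticFunction.Moebius ArithmeticFunction.zeta

def aX (X : ℝ) : ℤ := ⌊(X/4) ^ ((1:ℝ)/3)⌋
def bX (X : ℝ) : ℤ := ⌊(X/27) ^ ((1:ℝ)/2)⌋
def boxF (X : ℝ) : Finset (ℤ × ℤ) := Finset.Icc (-aX X) (aX X) ×ˢ Finset.Icc (-bX X) (bX X)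
def NN (X : ℝ) : ℕ := (aX X).toNat + (bX X).toNat
def kA (X : ℝ) (d : ℕ) : ℤ := aX X / (d:ℤ)^4
def kB (X : ℝ) (d : ℕ) : ℤ := bX X / (d:ℤ)^6
def yR (X : ℝ) : ℝ := (X/4) ^ ((1:ℝ)/3)
def zR (X : ℝ) : ℝ := (X/27) ^ ((1:ℝ)/2)
def c4 : ℝ := ((4:ℝ) ^ ((1:ℝ)/3))⁻¹
def c27 : ℝ := ((27:ℝ) ^ ((1:ℝ)/2))⁻¹
def GG (X : ℝ) (k : ℕ) : ℝ :=
  (μ k : ℝ) * ((2*(kA X k : ℝ)+1)*(2*(kB X k : ℝ)+1) - 1) / X ^ ((5:ℝ)/6)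
def MinP (AB : ℤ × ℤ) : Prop := ∀ p : ℕ, p.Prime → ¬((p:ℤ)^4 ∣ AB.1 ∧ (p:ℤ)^6 ∣ AB.2)
open scoped Classical in
def Mn (X : ℝ) : Finset (ℤ × ℤ) := (boxF X).filter MinP
open scoped Classical in
def Tg (X : ℝ) : Finset (ℤ × ℤ) := (boxF X).filter (· ∈ EllipticPairs)
open scoped Classical in
def Dg (X : ℝ) : Finset (ℤ × ℤ) := (boxF X).filter (fun AB => 4 * AB.1 ^ 3 + 27 * AB.2 ^ 2 = 0)

lemma aX_nonneg {X : ℝ} (hX : 0 ≤ X) : 0 ≤ aX X :=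
  Int.floor_nonneg.2 (Real.rpow_nonneg (by linarith) _)
lemma bX_nonneg {X : ℝ} (hX : 0 ≤ X) : 0 ≤ bX X :=
  Int.floor_nonneg.2 (Real.rpow_nonneg (by linarith) _)



lemma pow_lcm_dvd {d e n k : ℕ} (hk : k ≠ 0) (hd : d ^ k ∣ n) (he : e ^ k ∣ n) :
    Nat.lcm d e ^ k ∣ n := by
  rcases eq_or_ne n 0 with rfl | hn
  · simp
  have hd0 : d ≠ 0 := by rintro rfl; simp [zero_pow hk, zero_dvd_iff] at hd; exact hn hd
  have he0 : e ≠ 0 := by rintro rfl; simp [zero_pow hk, zero_dvd_iff] at he; exact hn he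
  have hl0 : Nat.lcm d e ≠ 0 := Nat.lcm_ne_zero hd0 he0
  rw [← Nat.factorization_le_iff_dvd (pow_ne_zero _ hl0) hn]
  rw [← Nat.factorization_le_iff_dvd (pow_ne_zero _ hd0) hn] at hd
  rw [← Nat.factorization_le_iff_dvd (pow_ne_zero _ he0) hn] at he
  intro p
  have hdp := hd p
  have hep := he p
  simp only [Nat.factorization_pow, Finsupp.smul_apply, Nat.factorization_lcm hd0 he0,
    Finsupp.sup_apply, smul_eq_mul] at *
  rcases le_total (d.factorization p) (e.factorization p) with h | h
  · simpa [sup_of_le_right h] using hep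
  · simpa [sup_of_le_left h] using hdp

open scoped Classical in
lemma sieve_nat (α β : ℕ) (hαβ : ¬(α = 0 ∧ β = 0)) (N : ℕ)
    (hN : ∀ d : ℕ, 0 < d → d ^ 4 ∣ α → d ^ 6 ∣ β → d ≤ N) :
    (∑ d ∈ Finset.range (N + 1), if d ^ 4 ∣ α ∧ d ^ 6 ∣ β then (μ d : ℤ) else 0)
      = if (∀ p : ℕ, p.Prime → ¬(p ^ 4 ∣ α ∧ p ^ 6 ∣ β)) then 1 else 0 := by
  classical
  set S : Finset ℕ := (Finset.range (N + 1)).filter (fun d => d ^ 4 ∣ α ∧ d ^ 6 ∣ β) with hS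
  have hmemS : ∀ d : ℕ, d ∈ S ↔ (0 < d ∧ d ^ 4 ∣ α ∧ d ^ 6 ∣ β) := by
    intro d
    simp only [hS, mem_filter, mem_range, Nat.lt_succ_iff]
    constructor
    · rintro ⟨hd, h4, h6⟩
      refine ⟨?_, h4, h6⟩
      rcases Nat.eq_zero_or_pos d with rfl | h
      · exfalso; apply hαβ
        constructor
        · simpa using h4
        · simpa using h6
      · exact h
    · rintro ⟨hd, h4, h6⟩
      exact ⟨hN d hd h4 h6, h4, h6⟩
  have h1S : 1 ∈ S := by simp [hmemS]
  have hSne : S.Nonempty := ⟨1, h1S⟩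
  set g : ℕ := S.max' hSne with hg
  have hgS : g ∈ S := S.max'_mem hSne
  have hg0 : 0 < g := ((hmemS g).1 hgS).1
  have hSdiv : S = g.divisors := by
    ext x
    rw [Nat.mem_divisors, hmemS]
    constructor
    · rintro ⟨hx, h4, h6⟩
      have hl4 : Nat.lcm x g ^ 4 ∣ α := pow_lcm_dvd (by norm_num) h4 ((hmemS g).1 hgS).2.1
      have hl6 : Nat.lcm x g ^ 6 ∣ β := pow_lcm_dvd (by norm_num) h6 ((hmemS g).1 hgS).2.2
      have hlpos : 0 < Nat.lcm x g := Nat.pos_of_ne_zero (Nat.lcm_ne_zero hx.ne' hg0.ne')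
      have hlS : Nat.lcm x g ∈ S := (hmemS _).2 ⟨hlpos, hl4, hl6⟩
      have hle : Nat.lcm x g ≤ g := S.le_max' _ hlS
      have hge : g ≤ Nat.lcm x g := Nat.le_of_dvd hlpos (Nat.dvd_lcm_right _ _)
      have : Nat.lcm x g = g := le_antisymm hle hge
      exact ⟨this ▸ Nat.dvd_lcm_left x g, hg0.ne'⟩
    · rintro ⟨hxg, -⟩
      have hx0 : 0 < x := Nat.pos_of_dvd_of_pos hxg hg0
      have h4 : x ^ 4 ∣ α := (pow_dvd_pow_of_dvd hxg 4).trans ((hmemS g).1 hgS).2.1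
      have h6 : x ^ 6 ∣ β := (pow_dvd_pow_of_dvd hxg 6).trans ((hmemS g).1 hgS).2.2
      exact ⟨hx0, h4, h6⟩
  have hsum : (∑ d ∈ Finset.range (N + 1), if d ^ 4 ∣ α ∧ d ^ 6 ∣ β then (μ d : ℤ) else 0)
      = ∑ d ∈ S, (μ d : ℤ) := by
    rw [hS, Finset.sum_filter]
  have hmz : (∑ d ∈ g.divisors, (μ d : ℤ)) = if g = 1 then 1 else 0 := by
    have h : (μ * ζ : ArithmeticFunction ℤ) g = (1 : ArithmeticFunction ℤ) g := by
      rw [moebius_mul_coe_zeta]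
    rwa [coe_mul_zeta_apply, one_apply] at h
  rw [hsum, hSdiv, hmz]
  congr 1
  apply propext
  constructor
  · intro hg1 p hp ⟨h4, h6⟩
    have hpS : p ∈ S := (hmemS p).2 ⟨hp.pos, h4, h6⟩
    rw [hSdiv, hg1] at hpS
    simp [Nat.mem_divisors] at hpS
    exact hp.ne_one hpS
  · intro hmin
    by_contra hg1
    obtain ⟨p, hp, hpg⟩ := Nat.exists_prime_and_dvd hg1
    have hpS : p ∈ S := by rw [hSdiv]; exact Nat.mem_divisors.2 ⟨hpg, hg0.ne'⟩
    exact hmin p hp ⟨((hmemS p).1 hpS).2.1, ((hmemS p).1 hpS).2.2⟩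

open scoped Classical in
lemma sieve_int (A B : ℤ) (hAB : ¬(A = 0 ∧ B = 0)) (N : ℕ)
    (hN : ∀ d : ℕ, 0 < d → (d:ℤ) ^ 4 ∣ A → (d:ℤ) ^ 6 ∣ B → d ≤ N) :
    (∑ d ∈ Finset.range (N + 1), if (d:ℤ) ^ 4 ∣ A ∧ (d:ℤ) ^ 6 ∣ B then (μ d : ℤ) else 0)
      = if (∀ p : ℕ, p.Prime → ¬((p:ℤ) ^ 4 ∣ A ∧ (p:ℤ) ^ 6 ∣ B)) then 1 else 0 := by
  have key : ∀ (d k : ℕ), ((d:ℤ) ^ k ∣ A ↔ d ^ k ∣ A.natAbs) := by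
    intro d k; rw [← Nat.cast_pow, Int.natCast_dvd]
  have key' : ∀ (d k : ℕ), ((d:ℤ) ^ k ∣ B ↔ d ^ k ∣ B.natAbs) := by
    intro d k; rw [← Nat.cast_pow, Int.natCast_dvd]
  simp only [key, key']
  apply sieve_nat
  · rw [Int.natAbs_eq_zero, Int.natAbs_eq_zero] at *; exact hAB
  · intro d hd h4 h6
    exact hN d hd ((key d 4).2 h4) ((key' d 6).2 h6)

lemma card_mult (n : ℤ) (hn : 0 ≤ n) (m : ℤ) (hm : 0 < m) :
    (((Finset.Icc (-n) n).filter (fun A => m ∣ A)).card : ℤ) = 2 * (n / m) + 1 := by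
  classical
  have himg : (Finset.Icc (-n) n).filter (fun A => m ∣ A)
      = (Finset.Icc (-(n/m)) (n/m)).image (fun t => m * t) := by
    ext A
    simp only [Finset.mem_filter, Finset.mem_Icc, Finset.mem_image]
    constructor
    · rintro ⟨⟨h1, h2⟩, t, rfl⟩
      refine ⟨t, ⟨?_, ?_⟩, rfl⟩
      · rw [neg_le, Int.le_ediv_iff_mul_le hm]; linarith
      · rw [Int.le_ediv_iff_mul_le hm]; linarith
    · rintro ⟨t, ⟨h1, h2⟩, rfl⟩
      have ht2 : t * m ≤ n := (Int.le_ediv_iff_mul_le hm).1 h2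
      have ht1 : -t * m ≤ n := (Int.le_ediv_iff_mul_le hm).1 (by linarith)
      exact ⟨⟨by linarith, by linarith⟩, ⟨t, rfl⟩⟩
  rw [himg, Finset.card_image_of_injective _ (fun a b h => by
    exact mul_left_cancel₀ hm.ne' h), Int.card_Icc]
  have h0 : 0 ≤ n / m := Int.ediv_nonneg hn hm.le
  omega



lemma yz_eq {X : ℝ} (hX : 0 < X) : yR X * zR X = c4 * c27 * X ^ ((5:ℝ)/6) := by
  rw [yR, zR, Real.div_rpow hX.le (by norm_num), Real.div_rpow hX.le (by norm_num),
    div_mul_div_comm, ← Real.rpow_add hX]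
  norm_num
  rw [c4, c27, div_eq_mul_inv, mul_inv]
  ring

-- bounds on kA, kB
lemma kA_le {X : ℝ} (hX : 0 ≤ X) {d : ℕ} (hd : 0 < d) :
    (kA X d : ℝ) ≤ yR X / (d:ℝ)^4 := by
  have hd4 : (0:ℤ) < (d:ℤ)^4 := by positivity
  have h1 : kA X d * (d:ℤ)^4 ≤ aX X := Int.ediv_mul_le _ hd4.ne'
  have h2 : ((aX X : ℝ)) ≤ yR X := Int.floor_le _
  have h1' : (kA X d : ℝ) * ((d:ℝ))^4 ≤ (aX X : ℝ) := by exact_mod_cast h1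
  rw [le_div_iff₀ (by positivity : (0:ℝ) < (d:ℝ)^4)]
  linarith

lemma kB_le {X : ℝ} (hX : 0 ≤ X) {d : ℕ} (hd : 0 < d) :
    (kB X d : ℝ) ≤ zR X / (d:ℝ)^6 := by
  have hd6 : (0:ℤ) < (d:ℤ)^6 := by positivity
  have h1 : kB X d * (d:ℤ)^6 ≤ bX X := Int.ediv_mul_le _ hd6.ne'
  have h2 : ((bX X : ℝ)) ≤ zR X := Int.floor_le _
  have h1' : (kB X d : ℝ) * ((d:ℝ))^6 ≤ (bX X : ℝ) := by exact_mod_cast h1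
  rw [le_div_iff₀ (by positivity : (0:ℝ) < (d:ℝ)^6)]
  linarith

lemma kA_ge {X : ℝ} (hX : 0 ≤ X) {d : ℕ} (hd : 0 < d) :
    yR X / (d:ℝ)^4 - 2 ≤ (kA X d : ℝ) := by
  have hd4 : (0:ℤ) < (d:ℤ)^4 := by positivity
  have h1 : aX X < (kA X d + 1) * (d:ℤ)^4 := Int.lt_ediv_add_one_mul_self _ hd4
  have h2 : yR X - 1 < (aX X : ℝ) := Int.sub_one_lt_floor _
  have h1' : ((aX X : ℝ)) < ((kA X d : ℝ) + 1) * ((d:ℝ))^4 := by exact_mod_cast h1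
  have hd1 : (1:ℝ) ≤ (d:ℝ)^4 := one_le_pow₀ (by exact_mod_cast hd)
  rw [sub_le_iff_le_add, div_le_iff₀ (by positivity : (0:ℝ) < (d:ℝ)^4)]
  nlinarith

lemma kB_ge {X : ℝ} (hX : 0 ≤ X) {d : ℕ} (hd : 0 < d) :
    zR X / (d:ℝ)^6 - 2 ≤ (kB X d : ℝ) := by
  have hd6 : (0:ℤ) < (d:ℤ)^6 := by positivity
  have h1 : bX X < (kB X d + 1) * (d:ℤ)^6 := Int.lt_ediv_add_one_mul_self _ hd6
  have h2 : zR X - 1 < (bX X : ℝ) := Int.sub_one_lt_floor _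
  have h1' : ((bX X : ℝ)) < ((kB X d : ℝ) + 1) * ((d:ℝ))^6 := by exact_mod_cast h1
  have hd1 : (1:ℝ) ≤ (d:ℝ)^6 := one_le_pow₀ (by exact_mod_cast hd)
  rw [sub_le_iff_le_add, div_le_iff₀ (by positivity : (0:ℝ) < (d:ℝ)^6)]
  nlinarith

lemma kA_nonneg {X : ℝ} (hX : 0 ≤ X) (d : ℕ) : (0:ℝ) ≤ (kA X d : ℝ) := by
  have : 0 ≤ kA X d := Int.ediv_nonneg (aX_nonneg hX) (by positivity)
  exact_mod_cast this

lemma kB_nonneg {X : ℝ} (hX : 0 ≤ X) (d : ℕ) : (0:ℝ) ≤ (kB X d : ℝ) := by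
  have : 0 ≤ kB X d := Int.ediv_nonneg (bX_nonneg hX) (by positivity)
  exact_mod_cast this

-- basic limits
lemma lim_y_div : Tendsto (fun X : ℝ => yR X / X ^ ((5:ℝ)/6)) atTop (𝓝 0) := by
  have key : Tendsto (fun X : ℝ => c4 * X ^ (-((1:ℝ)/2))) atTop (𝓝 (c4 * 0)) :=
    (tendsto_rpow_neg_atTop (by norm_num)).const_mul c4
  rw [mul_zero] at key
  apply key.congr'
  filter_upwards [eventually_gt_atTop 0] with X hX
  have hsub : X ^ ((1:ℝ)/3) / X ^ ((5:ℝ)/6) = X ^ (-((1:ℝ)/2)) := by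
    rw [← Real.rpow_sub hX]; norm_num
  rw [yR, Real.div_rpow hX.le (by norm_num), div_right_comm, hsub, div_eq_mul_inv, mul_comm, c4]
  exact (div_eq_mul_inv _ _).symm

lemma lim_z_div : Tendsto (fun X : ℝ => zR X / X ^ ((5:ℝ)/6)) atTop (𝓝 0) := by
  have key : Tendsto (fun X : ℝ => c27 * X ^ (-((1:ℝ)/3))) atTop (𝓝 (c27 * 0)) :=
    (tendsto_rpow_neg_atTop (by norm_num)).const_mul c27
  rw [mul_zero] at key
  apply key.congr'
  filter_upwards [eventually_gt_atTop 0] with X hX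
  have hsub : X ^ ((1:ℝ)/2) / X ^ ((5:ℝ)/6) = X ^ (-((1:ℝ)/3)) := by
    rw [← Real.rpow_sub hX]; norm_num
  rw [zR, Real.div_rpow hX.le (by norm_num), div_right_comm, hsub, div_eq_mul_inv, mul_comm, c27]
  exact (div_eq_mul_inv _ _).symm

lemma lim_one_div : Tendsto (fun X : ℝ => 1 / X ^ ((5:ℝ)/6)) atTop (𝓝 0) := by
  apply (tendsto_rpow_neg_atTop (y := (5:ℝ)/6) (by norm_num)).congr'
  filter_upwards [eventually_gt_atTop 0] with X hX
  rw [Real.rpow_neg hX.le, one_div]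

lemma lim_yz_div : Tendsto (fun X : ℝ => yR X * zR X / X ^ ((5:ℝ)/6)) atTop (𝓝 (c4 * c27)) := by
  apply tendsto_const_nhds.congr'
  filter_upwards [eventually_gt_atTop 0] with X hX
  rw [yz_eq hX, mul_div_assoc, div_self (ne_of_gt (Real.rpow_pos_of_pos hX _)), mul_one]

lemma lim_general (p q r s : ℝ) :
    Tendsto (fun X : ℝ => (p * (yR X * zR X) + q * yR X + r * zR X + s) / X ^ ((5:ℝ)/6))
      atTop (𝓝 (p * (c4 * c27))) := by
  have := ((lim_yz_div.const_mul p).add ((lim_y_div.const_mul q).add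
    ((lim_z_div.const_mul r).add (lim_one_div.const_mul s))))
  rw [mul_zero, mul_zero, mul_zero, add_zero, add_zero, add_zero] at this
  apply this.congr
  intro X
  ring

lemma tendsto_yR : Tendsto yR atTop atTop := by
  apply (tendsto_rpow_atTop (y := (1:ℝ)/3) (by norm_num)).comp
  exact Tendsto.atTop_div_const (by norm_num) tendsto_id

lemma tendsto_zR : Tendsto zR atTop atTop := by
  apply (tendsto_rpow_atTop (y := (1:ℝ)/2) (by norm_num)).comp
  exact Tendsto.atTop_div_const (by norm_num) tendsto_id

lemma perd {d : ℕ} (hd : 0 < d) :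
    Tendsto (fun X : ℝ => ((2*(kA X d:ℝ)+1)*(2*(kB X d:ℝ)+1) - 1) / X ^ ((5:ℝ)/6))
      atTop (𝓝 ((4 / ((d:ℝ)^4 * (d:ℝ)^6)) * (c4 * c27))) := by
  have hd4 : (0:ℝ) < (d:ℝ)^4 := by positivity
  have hd6 : (0:ℝ) < (d:ℝ)^6 := by positivity
  have hup := lim_general (4/((d:ℝ)^4*(d:ℝ)^6)) (2/(d:ℝ)^4) (2/(d:ℝ)^6) 0
  have hlo := lim_general (4/((d:ℝ)^4*(d:ℝ)^6)) (-6/(d:ℝ)^4) (-6/(d:ℝ)^6) 8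
  apply tendsto_of_tendsto_of_tendsto_of_le_of_le' hlo hup
  · filter_upwards [tendsto_yR.eventually_ge_atTop (2*(d:ℝ)^4),
      tendsto_zR.eventually_ge_atTop (2*(d:ℝ)^6), eventually_gt_atTop (0:ℝ)] with X h1 h2 h0
    have hpow : (0:ℝ) < X ^ ((5:ℝ)/6) := Real.rpow_pos_of_pos h0 _
    apply div_le_div_of_nonneg_right ?_ hpow.le
    have ha_ge := kA_ge h0.le hd
    have hb_ge := kB_ge h0.le hd
    have ha0 := kA_nonneg h0.le d
    have hb0 := kB_nonneg h0.le d
    have hyw : (2:ℝ) ≤ yR X / (d:ℝ)^4 := by rw [le_div_iff₀ hd4]; linarith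
    have hzv : (2:ℝ) ≤ zR X / (d:ℝ)^6 := by rw [le_div_iff₀ hd6]; linarith
    have key := mul_le_mul
      (show 2*(yR X/(d:ℝ)^4)-3 ≤ 2*(kA X d:ℝ)+1 by linarith)
      (show 2*(zR X/(d:ℝ)^6)-3 ≤ 2*(kB X d:ℝ)+1 by linarith)
      (show (0:ℝ) ≤ 2*(zR X/(d:ℝ)^6)-3 by linarith)
      (show (0:ℝ) ≤ 2*(kA X d:ℝ)+1 by linarith)
    calc 4/((d:ℝ)^4*(d:ℝ)^6) * (yR X * zR X) + -6/(d:ℝ)^4 * yR X + -6/(d:ℝ)^6 * zR X + 8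
        = (2*(yR X/(d:ℝ)^4)-3) * (2*(zR X/(d:ℝ)^6)-3) - 1 := by
          field_simp
          ring
      _ ≤ (2*(kA X d:ℝ)+1)*(2*(kB X d:ℝ)+1) - 1 := by linarith
  · filter_upwards [eventually_gt_atTop (0:ℝ)] with X h0
    have hpow : (0:ℝ) < X ^ ((5:ℝ)/6) := Real.rpow_pos_of_pos h0 _
    apply div_le_div_of_nonneg_right ?_ hpow.le
    have ha_le := kA_le h0.le hd
    have hb_le := kB_le h0.le hd
    have ha0 := kA_nonneg h0.le d
    have hb0 := kB_nonneg h0.le d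
    have hy0 : 0 ≤ yR X := Real.rpow_nonneg (by positivity) _
    have key := mul_le_mul
      (show 2*(kA X d:ℝ)+1 ≤ 2*(yR X/(d:ℝ)^4)+1 by linarith)
      (show 2*(kB X d:ℝ)+1 ≤ 2*(zR X/(d:ℝ)^6)+1 by linarith)
      (show (0:ℝ) ≤ 2*(kB X d:ℝ)+1 by linarith)
      (show (0:ℝ) ≤ 2*(yR X/(d:ℝ)^4)+1 by
        have := div_nonneg hy0 hd4.le; linarith)
    calc (2*(kA X d:ℝ)+1)*(2*(kB X d:ℝ)+1) - 1
        ≤ (2*(yR X/(d:ℝ)^4)+1) * (2*(zR X/(d:ℝ)^6)+1) - 1 := by linarith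
      _ = 4/((d:ℝ)^4*(d:ℝ)^6) * (yR X * zR X) + 2/(d:ℝ)^4 * yR X + 2/(d:ℝ)^6 * zR X + 0 := by
          field_simp
          ring

lemma GG_bound {X : ℝ} (hX : 1 ≤ X) (k : ℕ) : |GG X k| ≤ 8 / (k:ℝ)^4 := by
  rcases Nat.eq_zero_or_pos k with rfl | hk
  · simp [GG]
  have h0 : (0:ℝ) < X := by linarith
  have hk4 : (0:ℝ) < (k:ℝ)^4 := by positivity
  have hk1 : (1:ℝ) ≤ (k:ℝ) := by exact_mod_cast hk
  have hpow : (0:ℝ) < X ^ ((5:ℝ)/6) := Real.rpow_pos_of_pos h0 _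
  set W := X ^ ((5:ℝ)/6) with hW
  have ha_le := kA_le h0.le hk
  have hb_le := kB_le h0.le hk
  have ha0 := kA_nonneg h0.le k
  have hb0 := kB_nonneg h0.le k
  have hyW : yR X ≤ W := by
    calc yR X ≤ X ^ ((1:ℝ)/3) := Real.rpow_le_rpow (by positivity) (by linarith) (by norm_num)
      _ ≤ W := Real.rpow_le_rpow_of_exponent_le hX (by norm_num)
  have hzW : zR X ≤ W := by
    calc zR X ≤ X ^ ((1:ℝ)/2) := Real.rpow_le_rpow (by positivity) (by linarith) (by norm_num)
      _ ≤ W := Real.rpow_le_rpow_of_exponent_le hX (by norm_num)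
  have hyzW : yR X * zR X ≤ W := by
    have h1 : yR X * zR X ≤ X ^ ((1:ℝ)/3) * X ^ ((1:ℝ)/2) := by
      apply mul_le_mul (Real.rpow_le_rpow (by positivity) (by linarith) (by norm_num))
        (Real.rpow_le_rpow (by positivity) (by linarith) (by norm_num))
        (Real.rpow_nonneg (by positivity) _) (Real.rpow_nonneg h0.le _)
    rw [← Real.rpow_add h0] at h1
    norm_num at h1
    exact h1
  have hy0 : 0 ≤ yR X := Real.rpow_nonneg (by positivity) _
  have hz0 : 0 ≤ zR X := Real.rpow_nonneg (by positivity) _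
  -- numerator bound
  set P := (2*(kA X k:ℝ)+1)*(2*(kB X k:ℝ)+1) - 1 with hP
  have hP0 : 0 ≤ P := by nlinarith
  have hPle : P ≤ 8 * W / (k:ℝ)^4 := by
    have hk6 : (0:ℝ) < (k:ℝ)^6 := by positivity
    have hk46 : (k:ℝ)^4 ≤ (k:ℝ)^6 := pow_le_pow_right₀ hk1 (by norm_num)
    have hk410 : (k:ℝ)^4 ≤ (k:ℝ)^4 * (k:ℝ)^6 := le_mul_of_one_le_right hk4.le (one_le_pow₀ hk1)
    have key := mul_le_mul
      (show 2*(kA X k:ℝ)+1 ≤ 2*(yR X/(k:ℝ)^4)+1 by linarith)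
      (show 2*(kB X k:ℝ)+1 ≤ 2*(zR X/(k:ℝ)^6)+1 by linarith)
      (show (0:ℝ) ≤ 2*(kB X k:ℝ)+1 by linarith)
      (show (0:ℝ) ≤ 2*(yR X/(k:ℝ)^4)+1 by positivity)
    have expand : (2*(yR X/(k:ℝ)^4)+1) * (2*(zR X/(k:ℝ)^6)+1) - 1
        = 4*(yR X * zR X)/((k:ℝ)^4*(k:ℝ)^6) + 2*yR X/(k:ℝ)^4 + 2*zR X/(k:ℝ)^6 := by
      field_simp
      ring
    have t1 : 4*(yR X * zR X)/((k:ℝ)^4*(k:ℝ)^6) ≤ 4*W/(k:ℝ)^4 := by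
      apply div_le_div₀ (by positivity) (by linarith) hk4 hk410
    have t2 : 2*yR X/(k:ℝ)^4 ≤ 2*W/(k:ℝ)^4 := by
      apply div_le_div₀ (by positivity) (by linarith) hk4 le_rfl
    have t3 : 2*zR X/(k:ℝ)^6 ≤ 2*W/(k:ℝ)^4 := by
      apply div_le_div₀ (by positivity) (by linarith) hk4 hk46
    calc P ≤ (2*(yR X/(k:ℝ)^4)+1) * (2*(zR X/(k:ℝ)^6)+1) - 1 := by linarith
      _ = 4*(yR X * zR X)/((k:ℝ)^4*(k:ℝ)^6) + 2*yR X/(k:ℝ)^4 + 2*zR X/(k:ℝ)^6 := expand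
      _ ≤ 4*W/(k:ℝ)^4 + 2*W/(k:ℝ)^4 + 2*W/(k:ℝ)^4 := by linarith
      _ = 8 * W / (k:ℝ)^4 := by ring
  have hmu : |(μ k : ℝ)| ≤ 1 := by
    have := abs_moebius_le_one (n := k)
    exact_mod_cast this
  have : |GG X k| = |(μ k : ℝ)| * P / W := by
    rw [GG, abs_div, abs_mul, abs_of_pos hpow, abs_of_nonneg hP0]
  rw [this]
  have step : |(μ k : ℝ)| * P / W ≤ P / W := by
    apply div_le_div_of_nonneg_right ?_ hpow.le
    exact mul_le_of_le_one_left hP0 hmu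
  calc |(μ k : ℝ)| * P / W ≤ P / W := step
    _ ≤ (8 * W / (k:ℝ)^4) / W := div_le_div_of_nonneg_right hPle hpow.le
    _ = 8 / (k:ℝ)^4 := by
        field_simp





lemma minP_zero_false : ¬ MinP (0, 0) := by
  intro h
  exact h 2 Nat.prime_two ⟨dvd_zero _, dvd_zero _⟩

open scoped Classical in
lemma main_count {X : ℝ} (hX : 1 ≤ X) :
    ((Mn X).card : ℤ)
      = ∑ d ∈ Finset.range (NN X + 1),
          (μ d : ℤ) * ((2 * kA X d + 1) * (2 * kB X d + 1) - 1) := by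
  have hX0 : (0:ℝ) ≤ X := by linarith
  have ha := aX_nonneg hX0
  have hb := bX_nonneg hX0
  -- bound on divisors
  have hNbd : ∀ AB : ℤ × ℤ, AB ∈ boxF X → AB ≠ (0,0) →
      ∀ d : ℕ, 0 < d → (d:ℤ) ^ 4 ∣ AB.1 → (d:ℤ) ^ 6 ∣ AB.2 → d ≤ NN X := by
    rintro ⟨A, B⟩ hbox hne d hd h4 h6
    simp only [boxF, Finset.mem_product, Finset.mem_Icc] at hbox
    have hd1 : (1:ℤ) ≤ (d:ℤ) := by exact_mod_cast hd
    rcases eq_or_ne A 0 with rfl | hA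
    · have hB : B ≠ 0 := by rintro rfl; exact hne rfl
      have h1 : (d:ℤ) ≤ (d:ℤ)^6 := le_self_pow₀ hd1 (by norm_num)
      have h2 : (d:ℤ)^6 ≤ |B| := Int.le_of_dvd (abs_pos.2 hB) ((dvd_abs _ _).2 h6)
      have h3 : |B| ≤ bX X := abs_le.2 ⟨hbox.2.1, hbox.2.2⟩
      have : (d:ℤ) ≤ bX X := le_trans h1 (le_trans h2 h3)
      have : d ≤ (bX X).toNat := by omega
      simp [NN]; omega
    · have h1 : (d:ℤ) ≤ (d:ℤ)^4 := le_self_pow₀ hd1 (by norm_num)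
      have h2 : (d:ℤ)^4 ≤ |A| := Int.le_of_dvd (abs_pos.2 hA) ((dvd_abs _ _).2 h4)
      have h3 : |A| ≤ aX X := abs_le.2 ⟨hbox.1.1, hbox.1.2⟩
      have : (d:ℤ) ≤ aX X := le_trans h1 (le_trans h2 h3)
      have : d ≤ (aX X).toNat := by omega
      simp [NN]; omega
  have hzero_mem : ((0,0) : ℤ × ℤ) ∈ boxF X := by
    simp only [boxF, Finset.mem_product, Finset.mem_Icc]
    constructor <;> constructor <;> omega
  -- step 1: card as sum of indicators
  have step1 : ((Mn X).card : ℤ) = ∑ AB ∈ boxF X, (if MinP AB then (1:ℤ) else 0) := by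
    rw [Mn, Finset.card_filter]
    push_cast
    rfl
  -- the inner sieve sum
  set f : ℤ × ℤ → ℤ := fun AB => ∑ d ∈ Finset.range (NN X + 1),
      if (d:ℤ) ^ 4 ∣ AB.1 ∧ (d:ℤ) ^ 6 ∣ AB.2 then (μ d : ℤ) else 0 with hf
  have step2 : ∑ AB ∈ boxF X, (if MinP AB then (1:ℤ) else 0)
      = ∑ AB ∈ boxF X, f AB - ∑ d ∈ Finset.range (NN X + 1), (μ d : ℤ) := by
    have hf00 : f (0,0) = ∑ d ∈ Finset.range (NN X + 1), (μ d : ℤ) := by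
      simp [hf]
    have hsplit := Finset.add_sum_erase _ f hzero_mem
    have hsplit2 := Finset.add_sum_erase _ (fun AB => if MinP AB then (1:ℤ) else 0) hzero_mem
    simp only [minP_zero_false, if_false, zero_add] at hsplit2
    have heq : ∀ AB ∈ (boxF X).erase (0,0), (if MinP AB then (1:ℤ) else 0) = f AB := by
      intro AB hAB
      have hne : AB ≠ (0,0) := Finset.ne_of_mem_erase hAB
      have hmem : AB ∈ boxF X := Finset.mem_of_mem_erase hAB
      simp only [hf]
      rw [sieve_int AB.1 AB.2 (by rintro ⟨h1, h2⟩; exact hne (Prod.ext h1 h2)) (NN X)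
        (hNbd AB hmem hne)]
      rfl
    rw [← hsplit, ← hsplit2, Finset.sum_congr rfl heq, hf00]
    ring
  -- step 3: swap sums and count
  have step3 : ∑ AB ∈ boxF X, f AB
      = ∑ d ∈ Finset.range (NN X + 1), (μ d : ℤ) * ((2 * kA X d + 1) * (2 * kB X d + 1)) := by
    rw [hf, Finset.sum_comm]
    apply Finset.sum_congr rfl
    intro d _
    rcases Nat.eq_zero_or_pos d with rfl | hd
    · simp
    have hd4 : (0:ℤ) < (d:ℤ)^4 := by positivity
    have hd6 : (0:ℤ) < (d:ℤ)^6 := by positivity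
    have : ∑ AB ∈ boxF X, (if (d:ℤ) ^ 4 ∣ AB.1 ∧ (d:ℤ) ^ 6 ∣ AB.2 then (μ d : ℤ) else 0)
        = ((boxF X).filter (fun AB => (d:ℤ) ^ 4 ∣ AB.1 ∧ (d:ℤ) ^ 6 ∣ AB.2)).card * (μ d : ℤ) := by
      rw [← Finset.sum_filter, Finset.sum_const, nsmul_eq_mul]
    rw [this, boxF, Finset.filter_product]
    rw [Finset.card_product]
    push_cast
    rw [card_mult _ ha _ hd4, card_mult _ hb _ hd6]
    rw [kA, kB]
    ring
  rw [step1, step2, step3, ← Finset.sum_sub_distrib]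
  apply Finset.sum_congr rfl
  intro d _
  ring


lemma height_iff_A {X : ℝ} (hX : 0 ≤ X) (A : ℤ) :
    ((4 * |A| ^ 3 : ℤ) : ℝ) ≤ X ↔ (-aX X ≤ A ∧ A ≤ aX X) := by
  have h3 : ((X/4) ^ ((1:ℝ)/3)) ^ (3:ℕ) = X / 4 := by
    rw [← Real.rpow_natCast ((X/4) ^ ((1:ℝ)/3)) 3, ← Real.rpow_mul (by linarith)]
    norm_num
  have hu : 0 ≤ (X/4) ^ ((1:ℝ)/3) := Real.rpow_nonneg (by linarith) _
  rw [← abs_le]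
  push_cast
  rw [show ((4 : ℝ) * |(A:ℝ)| ^ 3 ≤ X) ↔ |(A:ℝ)| ^ (3:ℕ) ≤ X / 4 by constructor <;> intro <;> linarith]
  rw [← h3, pow_le_pow_iff_left₀ (abs_nonneg _) hu (by norm_num), aX, Int.le_floor, Int.cast_abs]

lemma height_iff_B {X : ℝ} (hX : 0 ≤ X) (B : ℤ) :
    ((27 * B ^ 2 : ℤ) : ℝ) ≤ X ↔ (-bX X ≤ B ∧ B ≤ bX X) := by
  have h2 : ((X/27) ^ ((1:ℝ)/2)) ^ (2:ℕ) = X / 27 := by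
    rw [← Real.rpow_natCast ((X/27) ^ ((1:ℝ)/2)) 2, ← Real.rpow_mul (by linarith)]
    norm_num
  have hu : 0 ≤ (X/27) ^ ((1:ℝ)/2) := Real.rpow_nonneg (by linarith) _
  rw [← abs_le]
  push_cast
  rw [show ((27 : ℝ) * (B:ℝ) ^ 2 ≤ X) ↔ |(B:ℝ)| ^ (2:ℕ) ≤ X / 27 by
    rw [sq_abs]; constructor <;> intro <;> linarith]
  rw [← h2, pow_le_pow_iff_left₀ (abs_nonneg _) hu (by norm_num), bX, Int.le_floor, Int.cast_abs]

open scoped Classical in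
lemma target_eq {X : ℝ} (hX : 0 ≤ X) : EllipticPairsLE X = ↑(Tg X) := by
  ext AB
  simp only [EllipticPairsLE, Set.mem_setOf_eq, Tg, Finset.coe_filter, boxF,
    Finset.mem_product, Finset.mem_Icc, Set.mem_setOf_eq]
  rw [height_iff_A hX, height_iff_B hX]
  tauto

lemma ncard_target {X : ℝ} (hX : 0 ≤ X) : (EllipticPairsLE X).ncard = (Tg X).card := by
  rw [target_eq hX, Set.ncard_coe_finset]

open scoped Classical in
lemma card_Dg {X : ℝ} (hX : 0 ≤ X) : (Dg X).card ≤ 6 * (aX X).toNat + 3 := by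
  have key : (Dg X).card ≤ ((Finset.Icc (-aX X) (aX X)) ×ˢ ({-1,0,1} : Finset ℤ)).card := by
    apply Finset.card_le_card_of_injOn (fun AB => (AB.1, Int.sign AB.2))
    · intro AB hAB
      simp only [Dg, Finset.mem_coe, Finset.mem_filter, boxF, Finset.mem_product, Finset.mem_Icc] at hAB
      simp only [Finset.mem_coe, Finset.mem_product, Finset.mem_Icc, Finset.mem_insert, Finset.mem_singleton]
      refine ⟨hAB.1.1, ?_⟩
      rcases Int.lt_trichotomy AB.2 0 with h | h | h
      · left; exact Int.sign_eq_neg_one_of_neg h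
      · right; left; rw [h]; rfl
      · right; right; exact Int.sign_eq_one_of_pos h
    · intro AB1 h1 AB2 h2 heq
      simp only [Dg, Finset.mem_coe, Finset.mem_filter] at h1 h2
      simp only [Prod.mk.injEq] at heq
      obtain ⟨hA, hsgn⟩ := heq
      have e1 := h1.2
      have e2 := h2.2
      rw [hA] at e1
      have hsq : AB1.2 ^ 2 = AB2.2 ^ 2 := by linarith
      have habs : AB1.2 = AB2.2 ∨ AB1.2 = -AB2.2 := sq_eq_sq_iff_eq_or_eq_neg.mp hsq
      rcases habs with h | h
      · exact Prod.ext hA h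
      · have h0 : AB2.2 = 0 := by
          rw [h, Int.sign_neg] at hsgn
          rcases Int.lt_trichotomy AB2.2 0 with hh | hh | hh
          · rw [Int.sign_eq_neg_one_of_neg hh] at hsgn; omega
          · exact hh
          · rw [Int.sign_eq_one_of_pos hh] at hsgn; omega
        refine Prod.ext hA ?_
        rw [h, h0, neg_zero]
  rw [Finset.card_product, Int.card_Icc] at key
  have : ((aX X + 1 - -aX X).toNat) = 2 * (aX X).toNat + 1 := by
    have := Int.floor_nonneg.2 (Real.rpow_nonneg (by linarith : (0:ℝ) ≤ X/4) ((1:ℝ)/3))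
    simp only [aX] at *
    omega
  rw [this] at key
  have hc : ({-1,0,1} : Finset ℤ).card = 3 := by decide
  rw [hc] at key
  omega

open scoped Classical in
lemma card_sandwich (X : ℝ) : (Tg X).card ≤ (Mn X).card ∧ (Mn X).card ≤ (Tg X).card + (Dg X).card := by
  constructor
  · apply Finset.card_le_card
    intro AB hAB
    simp only [Tg, Finset.mem_filter] at hAB
    simp only [Mn, Finset.mem_filter]
    exact ⟨hAB.1, hAB.2.2⟩
  · have hsub : Mn X ⊆ Tg X ∪ Dg X := by
      intro AB hAB
      simp only [Mn, Finset.mem_filter] at hAB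
      rcases eq_or_ne (4 * AB.1 ^ 3 + 27 * AB.2 ^ 2) 0 with h | h
      · exact Finset.mem_union_right _ (Finset.mem_filter.2 ⟨hAB.1, h⟩)
      · exact Finset.mem_union_left _ (Finset.mem_filter.2 ⟨hAB.1, ⟨h, hAB.2⟩⟩)
    calc (Mn X).card ≤ (Tg X ∪ Dg X).card := Finset.card_le_card hsub
      _ ≤ (Tg X).card + (Dg X).card := Finset.card_union_le _ _

lemma moebius_term_ofReal (n : ℕ) :
    LSeries.term (fun n => (μ n : ℂ)) (10:ℂ) n = (((μ n : ℝ) / (n:ℝ)^10 : ℝ) : ℂ) := by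
  rcases Nat.eq_zero_or_pos n with rfl | hn
  · simp [LSeries.term]
  · rw [LSeries.term_of_ne_zero hn.ne']
    have : ((n:ℂ) ^ (10:ℂ)) = ((n:ℝ)^10 : ℝ) := by
      rw [show (10:ℂ) = ((10:ℕ):ℂ) by norm_num, Complex.cpow_natCast]
      push_cast
      rfl
    rw [this]
    push_cast
    rfl

lemma one_term_ofReal (n : ℕ) :
    LSeries.term (1 : ℕ → ℂ) (10:ℂ) n
      = (((if n = 0 then (0:ℝ) else 1 / (n:ℝ)^10) : ℝ) : ℂ) := by
  rcases Nat.eq_zero_or_pos n with rfl | hn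
  · simp [LSeries.term]
  · rw [LSeries.term_of_ne_zero hn.ne', if_neg hn.ne']
    have : ((n:ℂ) ^ (10:ℂ)) = ((n:ℝ)^10 : ℝ) := by
      rw [show (10:ℂ) = ((10:ℕ):ℂ) by norm_num, Complex.cpow_natCast]
      push_cast
      rfl
    rw [this, Pi.one_apply]
    push_cast
    rfl

lemma summable_moebius_real : Summable (fun n : ℕ => (μ n : ℝ) / (n:ℝ)^10) := by
  have h : LSeriesSummable (fun n => (μ n : ℂ)) (10:ℂ) :=
    ArithmeticFunction.LSeriesSummable_moebius_iff.mpr (by norm_num)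
  have h2 : Summable (fun n : ℕ => (((μ n : ℝ) / (n:ℝ)^10 : ℝ) : ℂ)) :=
    (summable_congr moebius_term_ofReal).mp h
  exact Complex.summable_ofReal.mp h2

lemma summable_one_real : Summable (fun n : ℕ => if n = 0 then (0:ℝ) else 1 / (n:ℝ)^10) := by
  have h : LSeriesSummable (1 : ℕ → ℂ) (10:ℂ) :=
    LSeriesSummable_one_iff.mpr (by norm_num)
  have h2 : Summable (fun n : ℕ => (((if n = 0 then (0:ℝ) else 1 / (n:ℝ)^10) : ℝ) : ℂ)) :=
    (summable_congr one_term_ofReal).mp h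
  exact Complex.summable_ofReal.mp h2

lemma zeta_moebius_real :
    (∑' m : ℕ, ((m : ℝ) + 1) ^ (-10 : ℤ)) * (∑' k : ℕ, (μ k : ℝ) / (k:ℝ)^10) = 1 := by
  have key := LSeries_one_mul_Lseries_moebius (s := (10:ℂ)) (by norm_num)
  have hL1 : LSeries (1 : ℕ → ℂ) (10:ℂ) = ((∑' m : ℕ, ((m : ℝ) + 1) ^ (-10 : ℤ) : ℝ) : ℂ) := by
    rw [LSeries]
    have : ∀ n : ℕ, LSeries.term (1 : ℕ → ℂ) (10:ℂ) n
        = (((if n = 0 then (0:ℝ) else 1 / (n:ℝ)^10) : ℝ) : ℂ) := one_term_ofReal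
    rw [tsum_congr this, ← Complex.ofReal_tsum]
    congr 1
    rw [Summable.tsum_eq_zero_add summable_one_real]
    norm_num
  have hLμ : LSeries (fun n => (μ n : ℂ)) (10:ℂ)
      = ((∑' k : ℕ, (μ k : ℝ) / (k:ℝ)^10 : ℝ) : ℂ) := by
    rw [LSeries, tsum_congr moebius_term_ofReal, ← Complex.ofReal_tsum]
  rw [hL1, hLμ, ← Complex.ofReal_mul, show (1:ℂ) = ((1:ℝ):ℂ) by norm_num] at key
  exact_mod_cast key

lemma GG_vanish {X : ℝ} (hX : 1 ≤ X) {k : ℕ} (hk : k ∉ Finset.range (NN X + 1)) :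
    GG X k = 0 := by
  have hX0 : (0:ℝ) ≤ X := by linarith
  rw [Finset.mem_range] at hk
  push_neg at hk
  have hk1 : 1 ≤ k := by omega
  have hka : kA X k = 0 := by
    apply Int.ediv_eq_zero_of_lt (aX_nonneg hX0)
    have h1 : aX X < (k:ℤ) := by
      have : (aX X).toNat < k := by simp [NN] at hk; omega
      omega
    have h2 : (k:ℤ) ≤ (k:ℤ)^4 := le_self_pow₀ (by exact_mod_cast hk1) (by norm_num)
    omega
  have hkb : kB X k = 0 := by
    apply Int.ediv_eq_zero_of_lt (bX_nonneg hX0)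
    have h1 : bX X < (k:ℤ) := by
      have : (bX X).toNat < k := by simp [NN] at hk; omega
      omega
    have h2 : (k:ℤ) ≤ (k:ℤ)^6 := le_self_pow₀ (by exact_mod_cast hk1) (by norm_num)
    omega
  rw [GG, hka, hkb]
  norm_num

lemma tsum_GG {X : ℝ} (hX : 1 ≤ X) :
    ∑' k : ℕ, GG X k = ((Mn X).card : ℝ) / X ^ ((5:ℝ)/6) := by
  rw [tsum_eq_sum (s := Finset.range (NN X + 1)) (fun k hk => GG_vanish hX hk)]
  have := main_count hX
  have hcast : ((Mn X).card : ℝ)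
      = ∑ d ∈ Finset.range (NN X + 1),
          (μ d : ℝ) * ((2 * (kA X d : ℝ) + 1) * (2 * (kB X d : ℝ) + 1) - 1) := by
    rw [show ((Mn X).card : ℝ) = (((Mn X).card : ℤ) : ℝ) by push_cast; rfl, this]
    push_cast
    rfl
  rw [hcast, Finset.sum_div]
  apply Finset.sum_congr rfl
  intro d _
  rw [GG]

lemma summable_bound : Summable (fun k : ℕ => 8 / (k:ℝ)^4) := by
  have h := (Real.summable_one_div_nat_pow (p := 4)).mpr (by norm_num)
  have := h.mul_left 8
  apply this.congr
  intro k
  rw [mul_one_div]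

lemma GG_tendsto (k : ℕ) :
    Tendsto (fun X : ℝ => GG X k) atTop
      (𝓝 ((μ k : ℝ) * ((4 / ((k:ℝ)^4 * (k:ℝ)^6)) * (c4 * c27)))) := by
  rcases Nat.eq_zero_or_pos k with rfl | hk
  · have : (fun X : ℝ => GG X 0) = (fun _ => (0:ℝ)) := by
      funext X
      rw [GG]
      simp
    rw [this]
    simp
  · have h := (perd hk).const_mul ((μ k : ℝ))
    apply h.congr
    intro X
    rw [GG, mul_div_assoc]

lemma Mn_tendsto : Tendsto (fun X : ℝ => ((Mn X).card : ℝ) / X ^ ((5:ℝ)/6)) atTop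
    (𝓝 (∑' k : ℕ, (μ k : ℝ) * ((4 / ((k:ℝ)^4 * (k:ℝ)^6)) * (c4 * c27)))) := by
  have key := tendsto_tsum_of_dominated_convergence (f := fun (X : ℝ) (k : ℕ) => GG X k)
    (bound := fun k : ℕ => 8 / (k:ℝ)^4) summable_bound GG_tendsto ?_
  · apply key.congr'
    filter_upwards [eventually_ge_atTop (1:ℝ)] with X hX
    exact tsum_GG hX
  · filter_upwards [eventually_ge_atTop (1:ℝ)] with X hX k
    exact GG_bound hX k

lemma Dg_tendsto : Tendsto (fun X : ℝ => ((Dg X).card : ℝ) / X ^ ((5:ℝ)/6)) atTop (𝓝 0) := by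
  have hb : Tendsto (fun X : ℝ => (6 * yR X + 3) / X ^ ((5:ℝ)/6)) atTop (𝓝 0) := by
    have h1 := lim_y_div.const_mul (6:ℝ)
    have h2 := lim_one_div.const_mul (3:ℝ)
    rw [mul_zero] at h1 h2
    have := h1.add h2
    rw [add_zero] at this
    apply this.congr
    intro X
    ring
  apply squeeze_zero' ?_ ?_ hb
  · filter_upwards [eventually_ge_atTop (1:ℝ)] with X hX
    positivity
  · filter_upwards [eventually_ge_atTop (1:ℝ)] with X hX
    have hX0 : (0:ℝ) ≤ X := by linarith
    have hpow : (0:ℝ) < X ^ ((5:ℝ)/6) := Real.rpow_pos_of_pos (by linarith) _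
    apply div_le_div_of_nonneg_right ?_ hpow.le
    have hcard := card_Dg hX0
    have h1 : ((Dg X).card : ℝ) ≤ 6 * ((aX X).toNat : ℝ) + 3 := by exact_mod_cast hcard
    have h2 : (((aX X).toNat : ℝ)) ≤ yR X := by
      have hge := aX_nonneg hX0
      have : (((aX X).toNat : ℤ) : ℝ) = ((aX X : ℤ) : ℝ) := by
        congr 1
        omega
      rw [show (((aX X).toNat : ℝ)) = (((aX X).toNat : ℤ) : ℝ) by push_cast; rfl, this]
      exact Int.floor_le _
    linarith

lemma L_eq : (∑' k : ℕ, (μ k : ℝ) * ((4 / ((k:ℝ)^4 * (k:ℝ)^6)) * (c4 * c27)))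
    = 4 / ((∑' m : ℕ, ((m : ℝ) + 1) ^ (-10 : ℤ)) * (4 : ℝ) ^ ((1 : ℝ) / 3)
        * (27 : ℝ) ^ ((1 : ℝ) / 2)) := by
  have hre : ∀ k : ℕ, (μ k : ℝ) * ((4 / ((k:ℝ)^4 * (k:ℝ)^6)) * (c4 * c27))
      = (4 * c4 * c27) * ((μ k : ℝ) / (k:ℝ)^10) := by
    intro k
    have : (k:ℝ)^4 * (k:ℝ)^6 = (k:ℝ)^10 := by ring
    rw [this]
    ring
  rw [tsum_congr hre, tsum_mul_left]
  have hZμ := zeta_moebius_real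
  set Z := (∑' m : ℕ, ((m : ℝ) + 1) ^ (-10 : ℤ)) with hZ
  set S := (∑' k : ℕ, (μ k : ℝ) / (k:ℝ)^10) with hS
  have hZ0 : Z ≠ 0 := by
    intro h
    rw [h, zero_mul] at hZμ
    norm_num at hZμ
  have h4 : (0:ℝ) < (4:ℝ) ^ ((1:ℝ)/3) := Real.rpow_pos_of_pos (by norm_num) _
  have h27 : (0:ℝ) < (27:ℝ) ^ ((1:ℝ)/2) := Real.rpow_pos_of_pos (by norm_num) _
  have hSval : S = Z⁻¹ := by
    field_simp
    linarith [hZμ]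
  rw [hSval, c4, c27]
  field_simp

/-- `#ℰ(X)/X^{5/6} → 4/(ζ(10) ⬝ 4^{1/3} ⬝ 27^{1/2})` as `X → ∞`. -/
theorem ellipticPairs_count_asymptotic :
    Tendsto (fun X : ℝ => ((EllipticPairsLE X).ncard : ℝ) / X ^ ((5 : ℝ) / 6)) atTop
      (𝓝 (4 / ((∑' m : ℕ, ((m : ℝ) + 1) ^ (-10 : ℤ)) * (4 : ℝ) ^ ((1 : ℝ) / 3)
          * (27 : ℝ) ^ ((1 : ℝ) / 2)))) := by
  rw [← L_eq]
  set L := (∑' k : ℕ, (μ k : ℝ) * ((4 / ((k:ℝ)^4 * (k:ℝ)^6)) * (c4 * c27))) with hL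
  have hTg : Tendsto (fun X : ℝ => ((Tg X).card : ℝ) / X ^ ((5:ℝ)/6)) atTop (𝓝 L) := by
    have hlow := Mn_tendsto.sub Dg_tendsto
    rw [sub_zero] at hlow
    apply tendsto_of_tendsto_of_tendsto_of_le_of_le' hlow Mn_tendsto
    · filter_upwards [eventually_ge_atTop (1:ℝ)] with X hX
      have hpow : (0:ℝ) < X ^ ((5:ℝ)/6) := Real.rpow_pos_of_pos (by linarith) _
      rw [div_sub_div_same]
      apply div_le_div_of_nonneg_right ?_ hpow.le
      have h := (card_sandwich X).2
      have : ((Mn X).card : ℝ) ≤ ((Tg X).card : ℝ) + ((Dg X).card : ℝ) := by exact_mod_cast h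
      linarith
    · filter_upwards [eventually_ge_atTop (1:ℝ)] with X hX
      have hpow : (0:ℝ) < X ^ ((5:ℝ)/6) := Real.rpow_pos_of_pos (by linarith) _
      apply div_le_div_of_nonneg_right ?_ hpow.le
      exact_mod_cast (card_sandwich X).1
  apply hTg.congr'
  filter_upwards [eventually_ge_atTop (1:ℝ)] with X hX
  rw [ncard_target (by linarith)]

end
end
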